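/- arXiv:2306.00619 — 2 statements merged into one kernel-verified Lean document; each statement's English description precedes it below -/
import Mathlib

section
/- Consider the bi-virus higher-order SIWS model. Then: (i) every solution with (z^1(0), z^2(0)) ∈ D̄_bi satisfies (z^1(t), z^2(t)) ∈ D̄_bi for all t ≥ 0; (ii) (0,0) is an equilibrium; (iii) for each ν ∈ {1,2}, if (z^1, z^2) is a solution with (z^1(0), z^2(0)) ∈ D̄_bi and ẑ : [0,∞) → ℝ^{n+m} is a solution of the single-virus counterpart of virus ν with ẑ(0) = z^ν(0), then z^ν(t) ≤ ẑ(t) componentwise for all t ≥ 0. -/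
open Matrix Filter Topology MeasureTheory

noncomputable section

/-- `Z(z) = diag(z_1,…,z_n,0,…,0)`. -/
def Zmat (n : ℕ) {N : ℕ} (z : Fin N → ℝ) : Matrix (Fin N) (Fin N) ℝ :=
  Matrix.diagonal fun i => if (i : ℕ) < n then z i else 0

/-- `H(z)_i = zᵀ B_{fi} z`. -/
def Hquad {N : ℕ} (Bfi : Fin N → Matrix (Fin N) (Fin N) ℝ) (z : Fin N → ℝ) : Fin N → ℝ :=
  fun i => z ⬝ᵥ (Bfi i).mulVec z

/-- The higher-order SIWS vector field `G(z) = -D_f z + (I - Z(z)) (B_f z + H(z))`. -/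
def Gfield (n : ℕ) {N : ℕ} (Df Bf : Matrix (Fin N) (Fin N) ℝ)
    (Bfi : Fin N → Matrix (Fin N) (Fin N) ℝ) (z : Fin N → ℝ) : Fin N → ℝ :=
  -(Df.mulVec z) + (1 - Zmat n z).mulVec (Bf.mulVec z + Hquad Bfi z)

/-- Upper bound vector: `1` on the first `n` coordinates, `w_{j,max}` on the rest. -/
def ubound (n : ℕ) {N : ℕ} (Df Bf : Matrix (Fin N) (Fin N) ℝ)
    (Bfi : Fin N → Matrix (Fin N) (Fin N) ℝ) (i : Fin N) : ℝ :=
  if (i : ℕ) < n then 1 else (∑ q, Bf i q + ∑ p, ∑ q, Bfi i p q) / Df i i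

/-- The closed domain `D̄`. -/
def Dbar (n : ℕ) {N : ℕ} (Df Bf : Matrix (Fin N) (Fin N) ℝ)
    (Bfi : Fin N → Matrix (Fin N) (Fin N) ℝ) : Set (Fin N → ℝ) :=
  {z | ∀ i, 0 ≤ z i ∧ z i ≤ ubound n Df Bf Bfi i}

/-- The open domain `𝐃`. -/
def Dint (n : ℕ) {N : ℕ} (Df Bf : Matrix (Fin N) (Fin N) ℝ)
    (Bfi : Fin N → Matrix (Fin N) (Fin N) ℝ) : Set (Fin N → ℝ) :=
  {z | ∀ i, 0 < z i ∧ z i < ubound n Df Bf Bfi i}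

/-- A solution of `z' = G(z)` on `[0,∞)`. -/
def IsSolution {N : ℕ} (G : (Fin N → ℝ) → (Fin N → ℝ)) (z : ℝ → Fin N → ℝ) : Prop :=
  ∀ t : ℝ, 0 ≤ t → HasDerivAt z (G (z t)) t

/-- Irreducibility of a (nonnegative) square matrix. -/
def Irred {N : ℕ} (M : Matrix (Fin N) (Fin N) ℝ) : Prop :=
  ∀ i j : Fin N, i ≠ j → ∃ (r : ℕ) (k : ℕ → Fin N),
    k 0 = i ∧ k r = j ∧ ∀ s, s < r → 0 < M (k s) (k (s + 1))

/-- Spectral radius: maximum modulus of the complex eigenvalues. -/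
def specRad {N : ℕ} (M : Matrix (Fin N) (Fin N) ℝ) : ℝ :=
  sSup {r : ℝ | ∃ μ : ℂ, (M.map fun x : ℝ => (x : ℂ)).charpoly.IsRoot μ ∧ r = ‖μ‖}

/-- Spectral abscissa: maximum real part of the complex eigenvalues. -/
def specAbs {N : ℕ} (M : Matrix (Fin N) (Fin N) ℝ) : ℝ :=
  sSup {r : ℝ | ∃ μ : ℂ, (M.map fun x : ℝ => (x : ℂ)).charpoly.IsRoot μ ∧ r = μ.re}

/-- A matrix is Hurwitz if every eigenvalue has negative real part. -/
def IsHurwitz {N : ℕ} (M : Matrix (Fin N) (Fin N) ℝ) : Prop :=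
  ∀ μ : ℂ, (M.map fun x : ℝ => (x : ℂ)).charpoly.IsRoot μ → μ.re < 0

/-- Euclidean norm on `ℝ^N`. -/
def eucNorm {N : ℕ} (v : Fin N → ℝ) : ℝ := Real.sqrt (∑ i, v i ^ 2)

/-- Euclidean norm on a pair of vectors (concatenation). -/
def eucNorm2 {N : ℕ} (v w : Fin N → ℝ) : ℝ := Real.sqrt (∑ i, v i ^ 2 + ∑ i, w i ^ 2)

/-- Jacobian matrix of a vector field at a point. -/
def jacobian {N : ℕ} (G : (Fin N → ℝ) → (Fin N → ℝ)) (z : Fin N → ℝ) :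
    Matrix (Fin N) (Fin N) ℝ :=
  Matrix.of fun i j => fderiv ℝ G z (Pi.single j 1) i

/-- Structural hypotheses of the higher-order SIWS model. -/
structure ModelHyp (n : ℕ) {N : ℕ} (Df Bf : Matrix (Fin N) (Fin N) ℝ)
    (Bfi : Fin N → Matrix (Fin N) (Fin N) ℝ) : Prop where
  dDiag : ∀ i j, i ≠ j → Df i j = 0
  dPos : ∀ i, 0 < Df i i
  bNonneg : ∀ p q, 0 ≤ Bf p q
  bBlock : ∀ p q : Fin N, n ≤ (p : ℕ) → n ≤ (q : ℕ) → Bf p q = 0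
  bfiNonneg : ∀ i p q, 0 ≤ Bfi i p q
  bfiBlock1 : ∀ i : Fin N, (i : ℕ) < n → ∀ p q : Fin N, n ≤ (p : ℕ) → n ≤ (q : ℕ) →
    Bfi i p q = 0
  bfiBlock2 : ∀ i : Fin N, n ≤ (i : ℕ) → ∀ p q : Fin N, ¬((p : ℕ) < n ∧ (q : ℕ) < n) →
    Bfi i p q = 0

/-- Bi-virus vector field for one virus:
`G^ν(z, zo) = -D_f^ν z + (I - Z(z) - Z(zo)) (B_f^ν z + H^ν(z))`. -/
def GBi (n : ℕ) {N : ℕ} (Df Bf : Matrix (Fin N) (Fin N) ℝ)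
    (Bfi : Fin N → Matrix (Fin N) (Fin N) ℝ) (z zo : Fin N → ℝ) : Fin N → ℝ :=
  -(Df.mulVec z) + (1 - Zmat n z - Zmat n zo).mulVec (Bf.mulVec z + Hquad Bfi z)

/-- A solution of the bi-virus dynamics on `[0,∞)`. -/
def IsSolutionBi (n : ℕ) {N : ℕ} (Df1 Bf1 : Matrix (Fin N) (Fin N) ℝ)
    (Bfi1 : Fin N → Matrix (Fin N) (Fin N) ℝ) (Df2 Bf2 : Matrix (Fin N) (Fin N) ℝ)
    (Bfi2 : Fin N → Matrix (Fin N) (Fin N) ℝ) (z1 z2 : ℝ → Fin N → ℝ) : Prop :=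
  ∀ t : ℝ, 0 ≤ t →
    HasDerivAt z1 (GBi n Df1 Bf1 Bfi1 (z1 t) (z2 t)) t ∧
    HasDerivAt z2 (GBi n Df2 Bf2 Bfi2 (z2 t) (z1 t)) t

/-- Membership in the bi-virus domain `D̄_bi`. -/
def InDbarBi (n : ℕ) {N : ℕ} (Df1 Bf1 : Matrix (Fin N) (Fin N) ℝ)
    (Bfi1 : Fin N → Matrix (Fin N) (Fin N) ℝ) (Df2 Bf2 : Matrix (Fin N) (Fin N) ℝ)
    (Bfi2 : Fin N → Matrix (Fin N) (Fin N) ℝ) (z1 z2 : Fin N → ℝ) : Prop :=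
  z1 ∈ Dbar n Df1 Bf1 Bfi1 ∧ z2 ∈ Dbar n Df2 Bf2 Bfi2 ∧
    ∀ i : Fin N, (i : ℕ) < n → z1 i + z2 i ≤ 1

/-- The vector `𝟙` : first `n` coordinates equal `1`, the rest `0`. -/
def onevec (n : ℕ) {N : ℕ} : Fin N → ℝ := fun i => if (i : ℕ) < n then 1 else 0

/-- The general SIWS vector field. -/
def Ggen (n : ℕ) {N : ℕ} (Df : Matrix (Fin N) (Fin N) ℝ)
    (F H : (Fin N → ℝ) → (Fin N → ℝ)) (z : Fin N → ℝ) : Fin N → ℝ := fun i =>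
  if (i : ℕ) < n then -(Df i i * z i) + (1 - z i) * (F z i + H z i)
  else -(Df i i * z i) + (F z i + H z i)

/-- Upper bound vector for the general SIWS model. -/
def uboundGen (n : ℕ) {N : ℕ} (Df : Matrix (Fin N) (Fin N) ℝ)
    (F H : (Fin N → ℝ) → (Fin N → ℝ)) (i : Fin N) : ℝ :=
  if (i : ℕ) < n then 1 else (F (onevec n) i + H (onevec n) i) / Df i i

def DbarGen (n : ℕ) {N : ℕ} (Df : Matrix (Fin N) (Fin N) ℝ)
    (F H : (Fin N → ℝ) → (Fin N → ℝ)) : Set (Fin N → ℝ) :=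
  {z | ∀ i, 0 ≤ z i ∧ z i ≤ uboundGen n Df F H i}

def DintGen (n : ℕ) {N : ℕ} (Df : Matrix (Fin N) (Fin N) ℝ)
    (F H : (Fin N → ℝ) → (Fin N → ℝ)) : Set (Fin N → ℝ) :=
  {z | ∀ i, 0 < z i ∧ z i < uboundGen n Df F H i}

/-- Structural hypotheses of the general SIWS model. -/
structure GenHyp (n : ℕ) {N : ℕ} (Df : Matrix (Fin N) (Fin N) ℝ)
    (F H : (Fin N → ℝ) → (Fin N → ℝ)) : Prop where
  dDiag : ∀ i j, i ≠ j → Df i j = 0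
  dPos : ∀ i, 0 < Df i i
  fSmooth : ContDiff ℝ 1 F
  hSmooth : ContDiff ℝ 1 H
  fZero : F 0 = 0
  hZero : H 0 = 0
  fDep : ∀ i : Fin N, n ≤ (i : ℕ) → ∀ z z' : Fin N → ℝ,
    (∀ j : Fin N, (j : ℕ) < n → z j = z' j) → F z i = F z' i
  hDep : ∀ i : Fin N, n ≤ (i : ℕ) → ∀ z z' : Fin N → ℝ,
    (∀ j : Fin N, (j : ℕ) < n → z j = z' j) → H z i = H z' i
  fMono : ∀ (z : Fin N → ℝ) (i j : Fin N), 0 ≤ fderiv ℝ F z (Pi.single j 1) i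
  hMono : ∀ (z : Fin N → ℝ) (i j : Fin N), 0 ≤ fderiv ℝ H z (Pi.single j 1) i
  hJacZero : fderiv ℝ H 0 = 0
  edgeHyp : ∃ E : Set (Fin N × Fin N),
    (∀ e ∈ E, e.1 ≠ e.2) ∧
    (∀ i j : Fin N, i ≠ j → ∃ (r : ℕ) (k : ℕ → Fin N),
      k 0 = i ∧ k r = j ∧ ∀ s, s < r → (k s, k (s + 1)) ∈ E) ∧
    (∀ (z : Fin N → ℝ), ∀ e ∈ E, 0 < fderiv ℝ F z (Pi.single e.2 1) e.1)

/-- The perturbed SIWS vector field `G_ε(z) = -D_f z + (I - Z(z)) (B_f z + ε H(z))`. -/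
def Gpert (n : ℕ) {N : ℕ} (Df Bf : Matrix (Fin N) (Fin N) ℝ)
    (H : (Fin N → ℝ) → (Fin N → ℝ)) (ε : ℝ) (z : Fin N → ℝ) : Fin N → ℝ :=
  -(Df.mulVec z) + (1 - Zmat n z).mulVec (Bf.mulVec z + ε • H z)

namespace Stmt10Aux

open Real Set Filter Topology

/-- `phi s = (max s 0)^2`, a C¹ penalty function. -/
def phi (s : ℝ) : ℝ := max s 0 ^ 2

lemma phi_nonneg (s : ℝ) : 0 ≤ phi s := sq_nonneg _

lemma phi_of_nonpos {s : ℝ} (h : s ≤ 0) : phi s = 0 := by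
  simp [phi, max_eq_right h]

lemma nonpos_of_phi_eq_zero {s : ℝ} (h : phi s = 0) : s ≤ 0 := by
  by_contra hs
  push_neg at hs
  have : max s 0 = s := max_eq_left hs.le
  rw [phi, this] at h
  nlinarith

lemma le_one_of_phi_le_one {s : ℝ} (h : phi s ≤ 1) : s ≤ 1 := by
  by_contra hs
  push_neg at hs
  have : max s 0 = s := max_eq_left (by linarith)
  rw [phi, this] at h
  nlinarith

lemma hasDerivAt_phi (s : ℝ) : HasDerivAt phi (2 * max s 0) s := by
  rcases lt_trichotomy s 0 with hs | hs | hs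
  · have h0 : HasDerivAt (fun _ : ℝ => (0 : ℝ)) 0 s := hasDerivAt_const _ _
    have : HasDerivAt phi 0 s := by
      refine h0.congr_of_eventuallyEq ?_
      filter_upwards [Iio_mem_nhds hs] with x hx
      exact phi_of_nonpos (le_of_lt hx)
    simpa [max_eq_right hs.le] using this
  · subst hs
    rw [hasDerivAt_iff_isLittleO]
    simp only [phi, max_self, ne_eq, sub_zero, smul_eq_mul, mul_zero]
    rw [Asymptotics.isLittleO_iff]
    intro c hc
    filter_upwards [Metric.ball_mem_nhds (0:ℝ) hc] with x hx
    simp only [Metric.mem_ball, dist_zero_right, Real.norm_eq_abs] at hx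
    have h1 : |max x 0| ≤ |x| := by
      rcases le_or_gt x 0 with h | h
      · simp [max_eq_right h]
      · simp [max_eq_left h.le]
    have : |max x 0 ^ 2 - 0| ≤ |x| * |x| := by
      rw [sub_zero, abs_pow, sq]
      exact mul_le_mul h1 h1 (abs_nonneg _) (abs_nonneg _)
    calc ‖max x 0 ^ 2 - 0 ^ 2‖ = |max x 0 ^ 2 - 0| := by norm_num
      _ ≤ |x| * |x| := this
      _ ≤ c * |x| := by nlinarith [abs_nonneg x]
      _ = c * ‖x‖ := by norm_num
  · have h0 : HasDerivAt (fun x : ℝ => x ^ 2) (2 * s) s := by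
      simpa [mul_comm] using (hasDerivAt_pow 2 s)
    have : HasDerivAt phi (2 * s) s := by
      refine h0.congr_of_eventuallyEq ?_
      filter_upwards [Ioi_mem_nhds hs] with x hx
      simp [phi, max_eq_left (le_of_lt (mem_Ioi.mp hx))]
    simpa [max_eq_left hs.le] using this

/-- Grönwall-type wrapper: a nonnegative differentiable function vanishing at `0`
whose derivative satisfies `V' ≤ L * V` whenever `V ≤ 1` is identically zero. -/
lemma eq_zero_of_deriv_le_mul {V V' : ℝ → ℝ} {L : ℝ} (hL : 0 < L)
    (hd : ∀ t, 0 ≤ t → HasDerivAt V (V' t) t) (h0 : V 0 ≤ 0)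
    (hpos : ∀ t, 0 ≤ t → 0 ≤ V t)
    (hb : ∀ t, 0 ≤ t → V t ≤ 1 → V' t ≤ L * V t) :
    ∀ t, 0 ≤ t → V t = 0 := by
  intro T hT
  refine le_antisymm ?_ (hpos T hT)
  have eTpos : (0:ℝ) < Real.exp (L * T) := Real.exp_pos _
  have key : ∀ ε : ℝ, 0 < ε → ε ≤ L / Real.exp (L * T) →
      V T ≤ ε / L * (Real.exp (L * T) - 1) := by
    intro ε hε hε'
    set B : ℝ → ℝ := gronwallBound 0 L ε with hB
    have hBval : ∀ x : ℝ, B x = ε / L * (Real.exp (L * x) - 1) := by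
      intro x
      rw [hB, gronwallBound_of_K_ne_0 hL.ne']
      simp
    have hBle : ∀ x ∈ Icc (0:ℝ) T, B x ≤ 1 := by
      intro x hx
      rw [hBval]
      rw [div_mul_eq_mul_div, div_le_one hL]
      have h1 : Real.exp (L * x) ≤ Real.exp (L * T) :=
        Real.exp_le_exp.mpr (by nlinarith [hx.2, hL.le])
      have h2 : ε * Real.exp (L * T) ≤ L := by
        rw [le_div_iff₀ eTpos] at hε'
        linarith [hε']
      nlinarith
    have cont : ContinuousOn V (Icc 0 T) := fun x hx =>
      (hd x hx.1).continuousAt.continuousWithinAt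
    have slope_cond : ∀ x ∈ Ico (0:ℝ) T, ∀ r, V' x < r →
        ∃ᶠ z in 𝓝[>] x, slope V x z < r := by
      intro x hx r hr
      have h1 : Tendsto (slope V x) (𝓝[≠] x) (𝓝 (V' x)) :=
        hasDerivAt_iff_tendsto_slope.mp (hd x hx.1)
      have h2 : Tendsto (slope V x) (𝓝[>] x) (𝓝 (V' x)) :=
        h1.mono_left (nhdsWithin_mono x fun z hz => ne_of_gt hz)
      exact ((h2.eventually (Filter.Tendsto.eventually_lt_const hr tendsto_id)).frequently)
    have hBd : ∀ x : ℝ, HasDerivAt B (L * B x + ε) x := fun x =>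
      hasDerivAt_gronwallBound 0 L ε x
    have bound : ∀ x ∈ Ico (0:ℝ) T, V x = B x → V' x < L * B x + ε := by
      intro x hx hVB
      have h1 : V x ≤ 1 := by rw [hVB]; exact hBle x ⟨hx.1, hx.2.le⟩
      have := hb x hx.1 h1
      rw [hVB] at this
      linarith
    have := image_le_of_liminf_slope_right_lt_deriv_boundary cont slope_cond
      (by rw [hBval]; simp [h0]) hBd bound (right_mem_Icc.mpr hT)
    rw [hBval] at this
    exact this
  by_contra hVT
  push_neg at hVT
  set ε := min (L / Real.exp (L * T)) (V T * L / (2 * Real.exp (L * T))) with hεdef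
  have hε1 : 0 < ε := by
    apply lt_min
    · positivity
    · positivity
  have := key ε hε1 (min_le_left _ _)
  have h2 : ε ≤ V T * L / (2 * Real.exp (L * T)) := min_le_right _ _
  have h3 : ε / L * (Real.exp (L * T) - 1) ≤ ε / L * Real.exp (L * T) := by
    apply mul_le_mul_of_nonneg_left (by linarith) (by positivity)
  have h4 : ε / L * Real.exp (L * T) ≤ V T / 2 := by
    rw [div_mul_eq_mul_div, div_le_div_iff₀ hL (by norm_num : (0:ℝ) < 2)]
    rw [le_div_iff₀ (by positivity : (0:ℝ) < 2 * Real.exp (L * T))] at h2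
    nlinarith
  linarith

end Stmt10Aux
namespace Stmt10Aux

open Real Set Filter Topology Matrix

variable {n N : ℕ}

lemma mulVec_apply' (M : Matrix (Fin N) (Fin N) ℝ) (v : Fin N → ℝ) (i : Fin N) :
    M.mulVec v i = ∑ q, M i q * v q := rfl

lemma Hquad_apply (Bfi : Fin N → Matrix (Fin N) (Fin N) ℝ) (x : Fin N → ℝ) (i : Fin N) :
    Hquad Bfi x i = ∑ p, x p * ∑ q, Bfi i p q * x q := rfl

/-- Coordinate formula for the bi-virus field. -/
lemma GBi_apply {Df Bf : Matrix (Fin N) (Fin N) ℝ} {Bfi : Fin N → Matrix (Fin N) (Fin N) ℝ}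
    (hDf : ∀ i j, i ≠ j → Df i j = 0) (z zo : Fin N → ℝ) (i : Fin N) :
    GBi n Df Bf Bfi z zo i =
      -(Df i i * z i) + (1 - (if (i : ℕ) < n then z i + zo i else 0)) *
        (Bf.mulVec z i + Hquad Bfi z i) := by
  have hDdiag : Df = Matrix.diagonal fun j => Df j j := by
    ext a b
    by_cases h : a = b
    · subst h; simp [Matrix.diagonal]
    · simp [Matrix.diagonal, h, hDf a b h]
  have hD : Df.mulVec z i = Df i i * z i := by
    conv_lhs => rw [hDdiag]
    rw [Matrix.mulVec_diagonal]
  have hdiag : (1 - Zmat n z - Zmat n zo : Matrix (Fin N) (Fin N) ℝ) =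
      Matrix.diagonal (fun j : Fin N => 1 - (if (j : ℕ) < n then z j + zo j else 0)) := by
    ext a b
    rcases eq_or_ne a b with rfl | hab
    · simp only [Matrix.sub_apply, Matrix.one_apply_eq, Zmat, Matrix.diagonal_apply_eq]
      split_ifs <;> ring
    · simp [Matrix.sub_apply, Matrix.one_apply_ne hab, Zmat, Matrix.diagonal_apply_ne _ hab]
  unfold GBi
  rw [hdiag]
  simp only [Pi.add_apply, Pi.neg_apply, Matrix.mulVec_diagonal, hD]

lemma Zmat_zero : Zmat n (0 : Fin N → ℝ) = 0 := by
  unfold Zmat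
  rw [← Matrix.diagonal_zero]
  exact congrArg _ (funext fun j => by split_ifs <;> rfl)

lemma Hquad_zero (Bfi : Fin N → Matrix (Fin N) (Fin N) ℝ) : Hquad Bfi (0 : Fin N → ℝ) = 0 := by
  funext i
  simp [Hquad]

lemma GBi_zero (Df Bf : Matrix (Fin N) (Fin N) ℝ) (Bfi : Fin N → Matrix (Fin N) (Fin N) ℝ)
    (zo : Fin N → ℝ) : GBi n Df Bf Bfi 0 zo = 0 := by
  unfold GBi
  rw [Hquad_zero]
  simp

lemma Gfield_eq_GBi (Df Bf : Matrix (Fin N) (Fin N) ℝ) (Bfi : Fin N → Matrix (Fin N) (Fin N) ℝ)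
    (z : Fin N → ℝ) : Gfield n Df Bf Bfi z = GBi n Df Bf Bfi z 0 := by
  unfold Gfield GBi
  rw [Zmat_zero]
  simp

/-- Total mass of the infection matrices. -/
def bmass (Bf : Matrix (Fin N) (Fin N) ℝ) (Bfi : Fin N → Matrix (Fin N) (Fin N) ℝ) : ℝ :=
  ∑ p, ∑ q, Bf p q + ∑ j, ∑ p, ∑ q, Bfi j p q

lemma bmass_nonneg {Bf : Matrix (Fin N) (Fin N) ℝ} {Bfi : Fin N → Matrix (Fin N) (Fin N) ℝ}
    (hB : ∀ p q, 0 ≤ Bf p q) (hBi : ∀ j p q, 0 ≤ Bfi j p q) : 0 ≤ bmass Bf Bfi := by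
  unfold bmass
  have h1 : (0:ℝ) ≤ ∑ p, ∑ q, Bf p q :=
    Finset.sum_nonneg fun p _ => Finset.sum_nonneg fun q _ => hB p q
  have h2 : (0:ℝ) ≤ ∑ j, ∑ p, ∑ q, Bfi j p q :=
    Finset.sum_nonneg fun j _ => Finset.sum_nonneg fun p _ => Finset.sum_nonneg fun q _ => hBi j p q
  linarith

lemma entry_le_bmass {Bf : Matrix (Fin N) (Fin N) ℝ} {Bfi : Fin N → Matrix (Fin N) (Fin N) ℝ}
    (hB : ∀ p q, 0 ≤ Bf p q) (hBi : ∀ j p q, 0 ≤ Bfi j p q) (i : Fin N) :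
    ∑ q, Bf i q ≤ bmass Bf Bfi := by
  unfold bmass
  have h1 : ∑ q, Bf i q ≤ ∑ p, ∑ q, Bf p q :=
    Finset.single_le_sum (f := fun p => ∑ q, Bf p q)
      (fun p _ => Finset.sum_nonneg fun q _ => hB p q) (Finset.mem_univ i)
  have h2 : (0:ℝ) ≤ ∑ j, ∑ p, ∑ q, Bfi j p q :=
    Finset.sum_nonneg fun j _ => Finset.sum_nonneg fun p _ => Finset.sum_nonneg fun q _ => hBi j p q
  linarith

lemma quad_entry_le_bmass {Bf : Matrix (Fin N) (Fin N) ℝ} {Bfi : Fin N → Matrix (Fin N) (Fin N) ℝ}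
    (hB : ∀ p q, 0 ≤ Bf p q) (hBi : ∀ j p q, 0 ≤ Bfi j p q) (i : Fin N) :
    ∑ p, ∑ q, Bfi i p q ≤ bmass Bf Bfi := by
  unfold bmass
  have h1 : ∑ p, ∑ q, Bfi i p q ≤ ∑ j, ∑ p, ∑ q, Bfi j p q :=
    Finset.single_le_sum (f := fun j => ∑ p, ∑ q, Bfi j p q)
      (fun j _ => Finset.sum_nonneg fun p _ => Finset.sum_nonneg fun q _ => hBi j p q)
      (Finset.mem_univ i)
  have h2 : (0:ℝ) ≤ ∑ p, ∑ q, Bf p q :=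
    Finset.sum_nonneg fun p _ => Finset.sum_nonneg fun q _ => hB p q
  linarith

/-- Helper: product lower bound for coordinates bounded above by `K`. -/
lemma prod_lower {a b K S : ℝ} (hK : 0 ≤ K) (haK : a ≤ K) (hbK : b ≤ K)
    (haS : max (-a) 0 ≤ S) (hbS : max (-b) 0 ≤ S) (hS : 0 ≤ S) :
    -(K * S + K * S) ≤ a * b := by
  rcases le_or_gt 0 a with ha | ha
  · rcases le_or_gt 0 b with hb | hb
    · nlinarith
    · have : max (-b) 0 = -b := max_eq_left (by linarith)
      nlinarith [this ▸ hbS]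
  · have : max (-a) 0 = -a := max_eq_left (by linarith)
    nlinarith [this ▸ haS, mul_le_mul_of_nonpos_left hbK ha.le]

/-- Lower bound on the linear + quadratic infection term. -/
lemma F_lower {Bf : Matrix (Fin N) (Fin N) ℝ} {Bfi : Fin N → Matrix (Fin N) (Fin N) ℝ}
    (hB : ∀ p q, 0 ≤ Bf p q) (hBi : ∀ j p q, 0 ≤ Bfi j p q)
    (x : Fin N → ℝ) (S K : ℝ) (hK : 1 ≤ K) (hS : 0 ≤ S)
    (hxK : ∀ q, x q ≤ K) (hxm : ∀ q, max (-x q) 0 ≤ S) (i : Fin N) :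
    -(3 * K * bmass Bf Bfi * S) ≤ Bf.mulVec x i + Hquad Bfi x i := by
  have hlin : -(bmass Bf Bfi * S) ≤ Bf.mulVec x i := by
    rw [mulVec_apply']
    have h5 : ∑ q, -(Bf i q * S) ≤ ∑ q, Bf i q * x q := by
      apply Finset.sum_le_sum
      intro q _
      have h1 : -x q ≤ S := le_trans (le_max_left _ _) (hxm q)
      nlinarith [hB i q]
    have h6 : ∑ q, -(Bf i q * S) = -((∑ q, Bf i q) * S) := by
      rw [Finset.sum_mul, ← Finset.sum_neg_distrib]
    nlinarith [entry_le_bmass hB hBi i, h6 ▸ h5]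
  have hquad : -(2 * K * bmass Bf Bfi * S) ≤ Hquad Bfi x i := by
    rw [Hquad_apply]
    have hterm : ∀ p : Fin N, -(K * S + K * S) * (∑ q, Bfi i p q) ≤
        x p * ∑ q, Bfi i p q * x q := by
      intro p
      have h5 : ∑ q, -(K * S + K * S) * Bfi i p q ≤ ∑ q, x p * (Bfi i p q * x q) := by
        apply Finset.sum_le_sum
        intro q _
        have := prod_lower (K := K) (S := S) (by linarith) (hxK p) (hxK q)
          (hxm p) (hxm q) hS
        nlinarith [hBi i p q]
      calc -(K * S + K * S) * (∑ q, Bfi i p q) = ∑ q, -(K * S + K * S) * Bfi i p q := by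
            rw [Finset.mul_sum]
        _ ≤ ∑ q, x p * (Bfi i p q * x q) := h5
        _ = x p * ∑ q, Bfi i p q * x q := by rw [Finset.mul_sum]
    have h7 : ∑ p, -(K * S + K * S) * (∑ q, Bfi i p q) ≤ ∑ p, x p * ∑ q, Bfi i p q * x q :=
      Finset.sum_le_sum fun p _ => hterm p
    have h2 : ∑ p, -(K * S + K * S) * (∑ q, Bfi i p q) =
        -(K * S + K * S) * ∑ p, ∑ q, Bfi i p q := by rw [Finset.mul_sum]
    have h3 := quad_entry_le_bmass hB hBi i
    have h4 : (0:ℝ) ≤ ∑ p, ∑ q, Bfi i p q :=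
      Finset.sum_nonneg fun p _ => Finset.sum_nonneg fun q _ => hBi i p q
    have h9 : (K * S + K * S) * (∑ p, ∑ q, Bfi i p q) ≤ (K * S + K * S) * bmass Bf Bfi :=
      mul_le_mul_of_nonneg_left h3 (by nlinarith)
    nlinarith [h9, h2 ▸ h7]
  have h10 : (0:ℝ) ≤ bmass Bf Bfi * S * (K - 1) :=
    mul_nonneg (mul_nonneg (bmass_nonneg hB hBi) hS) (by linarith)
  nlinarith [h10]

/-- Upper bound on the infection term over the box `[-1, K]^N`. -/
lemma F_upper {Bf : Matrix (Fin N) (Fin N) ℝ} {Bfi : Fin N → Matrix (Fin N) (Fin N) ℝ}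
    (hB : ∀ p q, 0 ≤ Bf p q) (hBi : ∀ j p q, 0 ≤ Bfi j p q)
    (x : Fin N → ℝ) (K : ℝ) (hK : 1 ≤ K)
    (hx1 : ∀ q, -1 ≤ x q) (hxK : ∀ q, x q ≤ K) (i : Fin N) :
    Bf.mulVec x i + Hquad Bfi x i ≤ 2 * K ^ 2 * bmass Bf Bfi := by
  have hlin : Bf.mulVec x i ≤ K * bmass Bf Bfi := by
    rw [mulVec_apply']
    have h5 : ∑ q, Bf i q * x q ≤ ∑ q, Bf i q * K :=
      Finset.sum_le_sum fun q _ => mul_le_mul_of_nonneg_left (hxK q) (hB i q)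
    rw [← Finset.sum_mul] at h5
    nlinarith [entry_le_bmass hB hBi i]
  have hquad : Hquad Bfi x i ≤ K ^ 2 * bmass Bf Bfi := by
    rw [Hquad_apply]
    have hterm : ∀ p : Fin N, x p * ∑ q, Bfi i p q * x q ≤ K ^ 2 * ∑ q, Bfi i p q := by
      intro p
      have h5 : ∑ q, x p * (Bfi i p q * x q) ≤ ∑ q, K ^ 2 * Bfi i p q := by
        apply Finset.sum_le_sum
        intro q _
        have hp1 := hx1 p; have hq1 := hx1 q; have hpK := hxK p; have hqK := hxK q
        have hpq : x p * x q ≤ K ^ 2 := by nlinarith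
        nlinarith [hBi i p q]
      calc x p * ∑ q, Bfi i p q * x q = ∑ q, x p * (Bfi i p q * x q) := by rw [Finset.mul_sum]
        _ ≤ ∑ q, K ^ 2 * Bfi i p q := h5
        _ = K ^ 2 * ∑ q, Bfi i p q := by rw [Finset.mul_sum]
    have h7 : ∑ p, x p * ∑ q, Bfi i p q * x q ≤ ∑ p, K ^ 2 * ∑ q, Bfi i p q :=
      Finset.sum_le_sum fun p _ => hterm p
    have h2 : ∑ p, K ^ 2 * ∑ q, Bfi i p q = K ^ 2 * ∑ p, ∑ q, Bfi i p q := by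
      rw [Finset.mul_sum]
    have h3 := quad_entry_le_bmass hB hBi i
    have h9 : K ^ 2 * (∑ p, ∑ q, Bfi i p q) ≤ K ^ 2 * bmass Bf Bfi :=
      mul_le_mul_of_nonneg_left h3 (by positivity)
    nlinarith [h9, h2 ▸ h7]
  have h10 : (0:ℝ) ≤ K * bmass Bf Bfi * (K - 1) :=
    mul_nonneg (mul_nonneg (by linarith) (bmass_nonneg hB hBi)) (by linarith)
  nlinarith [h10]

/-- Nonnegativity of the infection term for a nonnegative state. -/
lemma F_nonneg {Bf : Matrix (Fin N) (Fin N) ℝ} {Bfi : Fin N → Matrix (Fin N) (Fin N) ℝ}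
    (hB : ∀ p q, 0 ≤ Bf p q) (hBi : ∀ j p q, 0 ≤ Bfi j p q)
    (x : Fin N → ℝ) (hx : ∀ q, 0 ≤ x q) (i : Fin N) :
    0 ≤ Bf.mulVec x i + Hquad Bfi x i := by
  have h1 : (0:ℝ) ≤ Bf.mulVec x i := by
    rw [mulVec_apply']
    exact Finset.sum_nonneg fun q _ => mul_nonneg (hB i q) (hx q)
  have h2 : (0:ℝ) ≤ Hquad Bfi x i := by
    rw [Hquad_apply]
    exact Finset.sum_nonneg fun p _ => mul_nonneg (hx p)
      (Finset.sum_nonneg fun q _ => mul_nonneg (hBi i p q) (hx q))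
  linarith

end Stmt10Aux
namespace Stmt10Aux

open Real Set Filter Topology Matrix

variable {n N : ℕ} {D B : Matrix (Fin N) (Fin N) ℝ} {Bi : Fin N → Matrix (Fin N) (Fin N) ℝ}

lemma ubound_nonneg (hmod : ModelHyp n D B Bi) (i : Fin N) : 0 ≤ ubound n D B Bi i := by
  unfold ubound
  split_ifs
  · norm_num
  · apply div_nonneg _ (hmod.dPos i).le
    have h1 : (0:ℝ) ≤ ∑ q, B i q := Finset.sum_nonneg fun q _ => hmod.bNonneg i q
    have h2 : (0:ℝ) ≤ ∑ p, ∑ q, Bi i p q :=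
      Finset.sum_nonneg fun p _ => Finset.sum_nonneg fun q _ => hmod.bfiNonneg i p q
    linarith

lemma ubound_eq_one (i : Fin N) (hi : (i : ℕ) < n) : ubound n D B Bi i = 1 := if_pos hi

lemma D_mul_ubound (hmod : ModelHyp n D B Bi) (i : Fin N) (hi : n ≤ (i : ℕ)) :
    D i i * ubound n D B Bi i = ∑ q, B i q + ∑ p, ∑ q, Bi i p q := by
  unfold ubound
  rw [if_neg (by omega)]
  exact mul_div_cancel₀ _ (hmod.dPos i).ne'

lemma mi_le_bmass (hmod : ModelHyp n D B Bi) (i : Fin N) :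
    ∑ q, B i q + ∑ p, ∑ q, Bi i p q ≤ bmass B Bi := by
  unfold bmass
  have h1 : ∑ q, B i q ≤ ∑ p, ∑ q, B p q :=
    Finset.single_le_sum (f := fun p => ∑ q, B p q)
      (fun p _ => Finset.sum_nonneg fun q _ => hmod.bNonneg p q) (Finset.mem_univ i)
  have h2 : ∑ p, ∑ q, Bi i p q ≤ ∑ j, ∑ p, ∑ q, Bi j p q :=
    Finset.single_le_sum (f := fun j => ∑ p, ∑ q, Bi j p q)
      (fun j _ => Finset.sum_nonneg fun p _ => Finset.sum_nonneg fun q _ => hmod.bfiNonneg j p q)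
      (Finset.mem_univ i)
  linarith

/-- Refined upper bound on the infection term at a resource node `i ≥ n`,
using the block structure. -/
lemma F_upper_block (hmod : ModelHyp n D B Bi) (x : Fin N → ℝ) (S : ℝ) (hS : 0 ≤ S)
    (hx1 : ∀ q, -1 ≤ x q) (hxln : ∀ q : Fin N, (q : ℕ) < n → x q ≤ 1 + 2 * S)
    (i : Fin N) (hi : n ≤ (i : ℕ)) :
    B.mulVec x i + Hquad Bi x i ≤ (1 + 2 * S) ^ 2 * (∑ q, B i q + ∑ p, ∑ q, Bi i p q) := by
  have hM : (1:ℝ) ≤ 1 + 2 * S := by linarith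
  have hlin : B.mulVec x i ≤ (1 + 2 * S) ^ 2 * ∑ q, B i q := by
    rw [mulVec_apply']
    have h5 : ∑ q, B i q * x q ≤ ∑ q, B i q * (1 + 2 * S) ^ 2 := by
      apply Finset.sum_le_sum
      intro q _
      rcases lt_or_ge (q : ℕ) n with hq | hq
      · have := hxln q hq
        nlinarith [mul_le_mul_of_nonneg_left this (hmod.bNonneg i q),
          mul_nonneg (hmod.bNonneg i q) hS,
          mul_nonneg (mul_nonneg (hmod.bNonneg i q) hS) hS]
      · rw [hmod.bBlock i q hi hq]
        nlinarith
    rw [← Finset.sum_mul] at h5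
    linarith [h5]
  have hquad : Hquad Bi x i ≤ (1 + 2 * S) ^ 2 * ∑ p, ∑ q, Bi i p q := by
    rw [Hquad_apply]
    have hterm : ∀ p : Fin N, x p * ∑ q, Bi i p q * x q ≤
        (1 + 2 * S) ^ 2 * ∑ q, Bi i p q := by
      intro p
      have h5 : ∑ q, x p * (Bi i p q * x q) ≤ ∑ q, (1 + 2 * S) ^ 2 * Bi i p q := by
        apply Finset.sum_le_sum
        intro q _
        by_cases hpq : (p : ℕ) < n ∧ (q : ℕ) < n
        · have hp := hxln p hpq.1
          have hq := hxln q hpq.2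
          have hprod : x p * x q ≤ (1 + 2 * S) ^ 2 := by
            nlinarith [hx1 p, hx1 q]
          nlinarith [hmod.bfiNonneg i p q]
        · rw [hmod.bfiBlock2 i hi p q hpq]
          nlinarith
      calc x p * ∑ q, Bi i p q * x q = ∑ q, x p * (Bi i p q * x q) := by rw [Finset.mul_sum]
        _ ≤ ∑ q, (1 + 2 * S) ^ 2 * Bi i p q := h5
        _ = (1 + 2 * S) ^ 2 * ∑ q, Bi i p q := by rw [Finset.mul_sum]
    have h7 : ∑ p, x p * ∑ q, Bi i p q * x q ≤ ∑ p, (1 + 2 * S) ^ 2 * ∑ q, Bi i p q :=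
      Finset.sum_le_sum fun p _ => hterm p
    rw [← Finset.mul_sum] at h7
    linarith
  nlinarith [hlin, hquad]

/-- Key bound (A): derivative of the violated constraint `z_i ≥ 0`. -/
lemma keyA (hmod : ModelHyp n D B Bi) (x y : Fin N → ℝ) (S K : ℝ)
    (hK : 1 ≤ K) (hS : 0 ≤ S)
    (hxK : ∀ q, x q ≤ K) (hxm : ∀ q, max (-x q) 0 ≤ S)
    (hx1 : ∀ q, -1 ≤ x q) (hy1 : ∀ q, -1 ≤ y q)
    (hsumS : ∀ q : Fin N, (q : ℕ) < n → max (x q + y q - 1) 0 ≤ S)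
    (i : Fin N) (hxi : x i < 0) :
    -(GBi n D B Bi x y i) ≤ (2 * K ^ 2 * bmass B Bi + 9 * K * bmass B Bi) * S := by
  rw [GBi_apply hmod.dDiag]
  set c : ℝ := 1 - (if (i : ℕ) < n then x i + y i else 0) with hc
  set F : ℝ := B.mulVec x i + Hquad Bi x i with hF
  have hd : D i i * x i ≤ 0 := by nlinarith [hmod.dPos i]
  have hcS : -S ≤ c := by
    rw [hc]
    split_ifs with h
    · rcases le_or_gt (x i + y i) 1 with h1 | h1
      · linarith
      · have := hsumS i h
        have h2 : max (x i + y i - 1) 0 = x i + y i - 1 := max_eq_left (by linarith)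
        rw [h2] at this
        linarith
    · linarith
  have hc3 : c ≤ 3 := by
    rw [hc]
    split_ifs with h
    · linarith [hx1 i, hy1 i]
    · linarith
  have hFlow := F_lower hmod.bNonneg hmod.bfiNonneg x S K hK hS hxK hxm i
  have hFup := F_upper hmod.bNonneg hmod.bfiNonneg x K hK hx1 hxK i
  rw [← hF] at hFlow hFup
  have hb0 := bmass_nonneg hmod.bNonneg hmod.bfiNonneg
  have hmain : -(c * F) ≤ 2 * K ^ 2 * bmass B Bi * S + 3 * (3 * K * bmass B Bi * S) := by
    rcases le_or_gt 0 F with hF0 | hF0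
    · have h1 : -(c * F) ≤ S * F := by nlinarith
      have h2 : S * F ≤ S * (2 * K ^ 2 * bmass B Bi) := by nlinarith
      nlinarith
    · have h1 : -(c * F) ≤ 3 * (-F) := by nlinarith
      have h2 : 3 * (-F) ≤ 3 * (3 * K * bmass B Bi * S) := by nlinarith
      nlinarith
  linarith [hmain, hd]

/-- Key bound (B): contribution of one virus to the sum constraint at a node `i < n`. -/
lemma keyB (hmod : ModelHyp n D B Bi) (x y : Fin N → ℝ) (S K Dtr : ℝ) (i : Fin N)
    (hK : 1 ≤ K) (hS : 0 ≤ S) (hDtr : D i i ≤ Dtr)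
    (hxK : ∀ q, x q ≤ K) (hxm : ∀ q, max (-x q) 0 ≤ S)
    (hi : (i : ℕ) < n) (hviol : 1 < x i + y i) (hsum2 : x i + y i ≤ 2) :
    GBi n D B Bi x y i ≤ (Dtr + 3 * K * bmass B Bi) * S := by
  rw [GBi_apply hmod.dDiag, if_pos hi]
  set F : ℝ := B.mulVec x i + Hquad Bi x i with hF
  have hFlow := F_lower hmod.bNonneg hmod.bfiNonneg x S K hK hS hxK hxm i
  rw [← hF] at hFlow
  have hdp := hmod.dPos i
  have hDtr0 : 0 ≤ Dtr := le_trans hdp.le hDtr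
  have hd : -(D i i * x i) ≤ Dtr * S := by
    rcases le_or_gt 0 (x i) with h | h
    · nlinarith [mul_nonneg hDtr0 hS]
    · have h2 : max (-x i) 0 = -x i := max_eq_left (by linarith)
      have h3 := hxm i
      rw [h2] at h3
      nlinarith [mul_le_mul_of_nonneg_left h3 hdp.le, mul_le_mul_of_nonneg_right hDtr hS]
  have hh : (0:ℝ) < x i + y i - 1 := by linarith
  have hh1 : x i + y i - 1 ≤ 1 := by linarith
  have hmain : (1 - (x i + y i)) * F ≤ 3 * K * bmass B Bi * S := by
    have hb0 := bmass_nonneg hmod.bNonneg hmod.bfiNonneg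
    have hC0 : (0:ℝ) ≤ 3 * K * bmass B Bi * S := by nlinarith [mul_nonneg (mul_nonneg (by linarith : (0:ℝ) ≤ 3 * K) hb0) hS]
    have h1 : (1 - (x i + y i)) * F ≤ (x i + y i - 1) * (3 * K * bmass B Bi * S) := by
      nlinarith
    nlinarith [hC0]
  nlinarith [hd, hmain]

/-- Key bound (C): derivative of the violated constraint `z_i ≤ w_max` at `i ≥ n`. -/
lemma keyC (hmod : ModelHyp n D B Bi) (x y : Fin N → ℝ) (S Smax : ℝ)
    (hS : 0 ≤ S) (hSle : S ≤ Smax)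
    (hx1 : ∀ q, -1 ≤ x q) (hxln : ∀ q : Fin N, (q : ℕ) < n → x q ≤ 1 + 2 * S)
    (i : Fin N) (hi : n ≤ (i : ℕ)) (hviol : ubound n D B Bi i < x i) :
    GBi n D B Bi x y i ≤ (4 * bmass B Bi * (1 + Smax)) * S := by
  rw [GBi_apply hmod.dDiag, if_neg (by omega)]
  set F : ℝ := B.mulVec x i + Hquad Bi x i with hF
  set m : ℝ := ∑ q, B i q + ∑ p, ∑ q, Bi i p q with hm
  have hFup := F_upper_block hmod x S hS hx1 hxln i hi
  rw [← hF, ← hm] at hFup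
  have hmb := mi_le_bmass hmod i
  rw [← hm] at hmb
  have hm0 : 0 ≤ m := by
    rw [hm]
    have h1 : (0:ℝ) ≤ ∑ q, B i q := Finset.sum_nonneg fun q _ => hmod.bNonneg i q
    have h2 : (0:ℝ) ≤ ∑ p, ∑ q, Bi i p q :=
      Finset.sum_nonneg fun p _ => Finset.sum_nonneg fun q _ => hmod.bfiNonneg i p q
    linarith
  have hDu : D i i * ubound n D B Bi i = m := by rw [hm]; exact D_mul_ubound hmod i hi
  have hdx : -(D i i * x i) ≤ -m := by
    have hdp := hmod.dPos i
    nlinarith [hDu]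
  have hb0 := bmass_nonneg hmod.bNonneg hmod.bfiNonneg
  -- G ≤ -m + (1+2S)^2 m = m(4S + 4S^2) ≤ 4 bmass (1+Smax) S
  have h1 : -m + (1 + 2 * S) ^ 2 * m = m * (4 * S + 4 * S ^ 2) := by ring
  have hSmax0 : 0 ≤ Smax := le_trans hS hSle
  have e1 : m * S ^ 2 ≤ m * (S * Smax) := by
    nlinarith [mul_le_mul_of_nonneg_left hSle (mul_nonneg hm0 hS)]
  have e2 : m * S ≤ bmass B Bi * S := mul_le_mul_of_nonneg_right hmb hS
  have e3 : m * (S * Smax) ≤ bmass B Bi * (S * Smax) :=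
    mul_le_mul_of_nonneg_right hmb (mul_nonneg hS hSmax0)
  have h2 : m * (4 * S + 4 * S ^ 2) ≤ bmass B Bi * (4 * S + 4 * S * Smax) := by
    nlinarith [e1, e2, e3]
  have goal2 : -(D i i * x i) + (1 - 0) * F ≤ 4 * bmass B Bi * (1 + Smax) * S := by
    have : (1 - (0:ℝ)) * F = F := by ring
    rw [this]
    nlinarith [hFup, hdx, h1, h2]
  exact goal2

end Stmt10Aux
namespace Stmt10Aux

open Real Set Filter Topology Matrix

variable {n N : ℕ} {D B : Matrix (Fin N) (Fin N) ℝ} {Bi : Fin N → Matrix (Fin N) (Fin N) ℝ}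

/-- Difference bound on the infection term between two nonnegative states. -/
lemma Fdiff_le (hmod : ModelHyp n D B Bi) (x w : Fin N → ℝ) (Sw U : ℝ)
    (hU1 : 1 ≤ U) (hSw0 : 0 ≤ Sw)
    (hx0 : ∀ q, 0 ≤ x q) (hxU : ∀ q, x q ≤ U)
    (hw0 : ∀ q, 0 ≤ w q) (hwU : ∀ q, w q ≤ U)
    (hSwm : ∀ q, max (x q - w q) 0 ≤ Sw) (i : Fin N) :
    (B.mulVec x i + Hquad Bi x i) - (B.mulVec w i + Hquad Bi w i) ≤
      3 * U * bmass B Bi * Sw := by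
  have hb0 := bmass_nonneg hmod.bNonneg hmod.bfiNonneg
  have hdm : ∀ q : Fin N, x q - w q ≤ Sw := fun q => le_trans (le_max_left _ _) (hSwm q)
  have hlin : B.mulVec x i - B.mulVec w i ≤ bmass B Bi * Sw := by
    rw [mulVec_apply', mulVec_apply', ← Finset.sum_sub_distrib]
    have h5 : ∑ q, (B i q * x q - B i q * w q) ≤ ∑ q, B i q * Sw := by
      apply Finset.sum_le_sum
      intro q _
      nlinarith [hmod.bNonneg i q, hdm q]
    rw [← Finset.sum_mul] at h5
    nlinarith [entry_le_bmass hmod.bNonneg hmod.bfiNonneg i,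
      mul_le_mul_of_nonneg_right (entry_le_bmass hmod.bNonneg hmod.bfiNonneg i) hSw0]
  have hquad : Hquad Bi x i - Hquad Bi w i ≤ 2 * U * bmass B Bi * Sw := by
    rw [Hquad_apply, Hquad_apply, ← Finset.sum_sub_distrib]
    have hterm : ∀ p : Fin N, x p * (∑ q, Bi i p q * x q) - w p * (∑ q, Bi i p q * w q) ≤
        (2 * U * Sw) * ∑ q, Bi i p q := by
      intro p
      have key : ∑ q, (x p * (Bi i p q * x q) - w p * (Bi i p q * w q)) ≤
          ∑ q, (2 * U * Sw) * Bi i p q := by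
        apply Finset.sum_le_sum
        intro q _
        have h1 : x p * x q - w p * w q ≤ 2 * U * Sw := by
          have e1 : x p * (x q - w q) ≤ U * Sw := by
            nlinarith [hx0 p, hxU p, hdm q, mul_le_mul_of_nonneg_left (hdm q) (hx0 p)]
          have e2 : (x p - w p) * w q ≤ Sw * U := by
            nlinarith [hw0 q, hwU q, hdm p, mul_le_mul_of_nonneg_right (hdm p) (hw0 q)]
          nlinarith [e1, e2]
        nlinarith [hmod.bfiNonneg i p q, mul_le_mul_of_nonneg_right h1 (hmod.bfiNonneg i p q)]
      calc x p * (∑ q, Bi i p q * x q) - w p * (∑ q, Bi i p q * w q)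
          = ∑ q, (x p * (Bi i p q * x q) - w p * (Bi i p q * w q)) := by
            rw [Finset.sum_sub_distrib, Finset.mul_sum, Finset.mul_sum]
        _ ≤ ∑ q, (2 * U * Sw) * Bi i p q := key
        _ = (2 * U * Sw) * ∑ q, Bi i p q := by rw [Finset.mul_sum]
    have h7 : ∑ p, (x p * (∑ q, Bi i p q * x q) - w p * (∑ q, Bi i p q * w q)) ≤
        ∑ p, (2 * U * Sw) * ∑ q, Bi i p q := Finset.sum_le_sum fun p _ => hterm p
    rw [← Finset.mul_sum] at h7
    have h3 := quad_entry_le_bmass hmod.bNonneg hmod.bfiNonneg i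
    nlinarith [mul_le_mul_of_nonneg_left h3 (by positivity : (0:ℝ) ≤ 2 * U * Sw)]
  nlinarith [mul_le_mul_of_nonneg_right
    (mul_le_mul_of_nonneg_right hU1 hb0) hSw0]

/-- Key comparison bound: the bi-virus field exceeds the single-virus field by at
most a multiple of the total overshoot, at coordinates where `x` overshoots `w`. -/
lemma keyComp (hmod : ModelHyp n D B Bi) (x y w : Fin N → ℝ) (Sw U : ℝ)
    (hU1 : 1 ≤ U) (hu : ∀ q, ubound n D B Bi q ≤ U) (hSw0 : 0 ≤ Sw)
    (hx0 : ∀ q, 0 ≤ x q) (hxu : ∀ q, x q ≤ ubound n D B Bi q)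
    (hy0 : ∀ q, 0 ≤ y q) (hsum : ∀ q : Fin N, (q : ℕ) < n → x q + y q ≤ 1)
    (hw0 : ∀ q, 0 ≤ w q) (hwu : ∀ q, w q ≤ ubound n D B Bi q)
    (hSwm : ∀ q, max (x q - w q) 0 ≤ Sw)
    (i : Fin N) (hwi : w i < x i) :
    GBi n D B Bi x y i - GBi n D B Bi w 0 i ≤ (3 * U * bmass B Bi) * Sw := by
  have hxU : ∀ q, x q ≤ U := fun q => le_trans (hxu q) (hu q)
  have hwU : ∀ q, w q ≤ U := fun q => le_trans (hwu q) (hu q)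
  have hFd := Fdiff_le hmod x w Sw U hU1 hSw0 hx0 hxU hw0 hwU hSwm i
  have hFx0 := F_nonneg hmod.bNonneg hmod.bfiNonneg x hx0 i
  have hFw0 := F_nonneg hmod.bNonneg hmod.bfiNonneg w hw0 i
  have hb0 := bmass_nonneg hmod.bNonneg hmod.bfiNonneg
  rw [GBi_apply hmod.dDiag, GBi_apply hmod.dDiag]
  simp only [Pi.zero_apply, add_zero]
  set Fx : ℝ := B.mulVec x i + Hquad Bi x i with hFxdef
  set Fw : ℝ := B.mulVec w i + Hquad Bi w i with hFwdef
  have hdterm : -(D i i * x i) + (D i i * w i) ≤ 0 := by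
    nlinarith [hmod.dPos i]
  rcases lt_or_ge (i : ℕ) n with hi | hi
  · rw [if_pos hi, if_pos hi]
    have hx1 : x i ≤ 1 := by
      have := hxu i
      rwa [ubound_eq_one i hi] at this
    have hw1 : w i ≤ 1 := by
      have := hwu i
      rwa [ubound_eq_one i hi] at this
    have hcx : 1 - (x i + y i) ≤ 1 - x i := by linarith [hy0 i]
    have hcx0 : 0 ≤ 1 - (x i + y i) := by linarith [hsum i hi]
    have step1 : (1 - (x i + y i)) * Fx ≤ (1 - x i) * Fx :=
      mul_le_mul_of_nonneg_right hcx hFx0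
    have step2 : (1 - x i) * Fx - (1 - w i) * Fw ≤ (1 - x i) * (Fx - Fw) := by
      have : (1 - x i) * Fx - (1 - w i) * Fw =
          (1 - x i) * (Fx - Fw) + (w i - x i) * Fw := by ring
      rw [this]
      nlinarith [mul_nonneg (le_of_lt (sub_pos.mpr hwi)) hFw0]
    have step3 : (1 - x i) * (Fx - Fw) ≤ 3 * U * bmass B Bi * Sw := by
      have h1 : 0 ≤ 1 - x i := by linarith
      have h2 : 1 - x i ≤ 1 := by linarith [hx0 i]
      have h3 : (1 - x i) * (Fx - Fw) ≤ (1 - x i) * (3 * U * bmass B Bi * Sw) :=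
        mul_le_mul_of_nonneg_left hFd h1
      nlinarith [mul_nonneg (mul_nonneg (mul_nonneg
        (by linarith : (0:ℝ) ≤ 3 * U) hb0) hSw0) (sub_nonneg.mpr h2)]
    linarith [step1, step2, step3, hdterm]
  · rw [if_neg (by omega), if_neg (by omega)]
    have : (1 - (0:ℝ)) * Fx - (1 - (0:ℝ)) * Fw = Fx - Fw := by ring
    nlinarith [hFd, hdterm]

end Stmt10Aux
namespace Stmt10Aux

open Real Set Filter Topology Matrix

variable {n N : ℕ}

lemma hasDerivAt_coord {z : ℝ → Fin N → ℝ} {g : Fin N → ℝ} {t : ℝ}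
    (h : HasDerivAt z g t) (i : Fin N) : HasDerivAt (fun s => z s i) (g i) t := by
  have := (ContinuousLinearMap.proj (R := ℝ) (φ := fun _ : Fin N => ℝ) i).hasFDerivAt.comp_hasDerivAt t h
  exact this

lemma aux_prod {s gg c : ℝ} (hs : 0 ≤ s) (h : 0 < s → gg ≤ c) : s * gg ≤ s * c := by
  rcases eq_or_lt_of_le hs with h0 | h0
  · rw [← h0]; simp
  · exact mul_le_mul_of_nonneg_left (h h0) h0.le

lemma pos_max_imp {a : ℝ} (h : 0 < max a 0) : 0 < a := by
  by_contra hc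
  push_neg at hc
  rw [max_eq_right hc] at h
  exact lt_irrefl 0 h

/-- Penalty term per coordinate. -/
def vtF (n : ℕ) {N : ℕ} (u1 u2 x y : Fin N → ℝ) (i : Fin N) : ℝ :=
  phi (-(x i)) + phi (-(y i)) +
    (if (i : ℕ) < n then phi (x i + y i - 1)
     else phi (x i - u1 i) + phi (y i - u2 i))

/-- Violation term per coordinate. -/
def stF (n : ℕ) {N : ℕ} (u1 u2 x y : Fin N → ℝ) (i : Fin N) : ℝ :=
  max (-(x i)) 0 + max (-(y i)) 0 +
    (if (i : ℕ) < n then max (x i + y i - 1) 0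
     else max (x i - u1 i) 0 + max (y i - u2 i) 0)

/-- Derivative term per coordinate. -/
def dtF (n : ℕ) {N : ℕ} (u1 u2 x y g1 g2 : Fin N → ℝ) (i : Fin N) : ℝ :=
  2 * max (-(x i)) 0 * (-(g1 i)) + 2 * max (-(y i)) 0 * (-(g2 i)) +
    (if (i : ℕ) < n then 2 * max (x i + y i - 1) 0 * (g1 i + g2 i)
     else 2 * max (x i - u1 i) 0 * (g1 i) + 2 * max (y i - u2 i) 0 * (g2 i))

set_option maxHeartbeats 2000000 in
lemma bi_invariance {Df1 Bf1 : Matrix (Fin N) (Fin N) ℝ} {Bfi1 : Fin N → Matrix (Fin N) (Fin N) ℝ}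
    {Df2 Bf2 : Matrix (Fin N) (Fin N) ℝ} {Bfi2 : Fin N → Matrix (Fin N) (Fin N) ℝ}
    (hmod1 : ModelHyp n Df1 Bf1 Bfi1) (hmod2 : ModelHyp n Df2 Bf2 Bfi2)
    (z1 z2 : ℝ → Fin N → ℝ)
    (hsol : IsSolutionBi n Df1 Bf1 Bfi1 Df2 Bf2 Bfi2 z1 z2)
    (hinit : InDbarBi n Df1 Bf1 Bfi1 Df2 Bf2 Bfi2 (z1 0) (z2 0)) :
    ∀ t, 0 ≤ t → InDbarBi n Df1 Bf1 Bfi1 Df2 Bf2 Bfi2 (z1 t) (z2 t) := by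
  classical
  obtain ⟨u1, hu1def⟩ : ∃ u : Fin N → ℝ, u = ubound n Df1 Bf1 Bfi1 := ⟨_, rfl⟩
  obtain ⟨u2, hu2def⟩ : ∃ u : Fin N → ℝ, u = ubound n Df2 Bf2 Bfi2 := ⟨_, rfl⟩
  obtain ⟨G1, hG1def⟩ : ∃ G : ℝ → Fin N → ℝ, G = fun t => GBi n Df1 Bf1 Bfi1 (z1 t) (z2 t) :=
    ⟨_, rfl⟩
  obtain ⟨G2, hG2def⟩ : ∃ G : ℝ → Fin N → ℝ, G = fun t => GBi n Df2 Bf2 Bfi2 (z2 t) (z1 t) :=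
    ⟨_, rfl⟩
  obtain ⟨vt, hvtdef⟩ : ∃ v : ℝ → Fin N → ℝ, v = fun t => vtF n u1 u2 (z1 t) (z2 t) := ⟨_, rfl⟩
  obtain ⟨st, hstdef⟩ : ∃ v : ℝ → Fin N → ℝ, v = fun t => stF n u1 u2 (z1 t) (z2 t) := ⟨_, rfl⟩
  obtain ⟨V, hVdef⟩ : ∃ v : ℝ → ℝ, v = fun t => ∑ i, vt t i := ⟨_, rfl⟩
  obtain ⟨S, hSdef⟩ : ∃ v : ℝ → ℝ, v = fun t => ∑ i, st t i := ⟨_, rfl⟩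
  obtain ⟨V', hV'def⟩ : ∃ v : ℝ → ℝ, v = fun t => ∑ i, dtF n u1 u2 (z1 t) (z2 t) (G1 t) (G2 t) i :=
    ⟨_, rfl⟩
  have hvt : ∀ t i, vt t i = phi (-(z1 t i)) + phi (-(z2 t i)) +
      (if (i : ℕ) < n then phi (z1 t i + z2 t i - 1)
       else phi (z1 t i - u1 i) + phi (z2 t i - u2 i)) := by
    intro t i; rw [hvtdef]; rfl
  have hst : ∀ t i, st t i = max (-(z1 t i)) 0 + max (-(z2 t i)) 0 +
      (if (i : ℕ) < n then max (z1 t i + z2 t i - 1) 0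
       else max (z1 t i - u1 i) 0 + max (z2 t i - u2 i) 0) := by
    intro t i; rw [hstdef]; rfl
  have hVt : ∀ t, V t = ∑ i, vt t i := by intro t; rw [hVdef]
  have hSt : ∀ t, S t = ∑ i, st t i := by intro t; rw [hSdef]
  have hV't : ∀ t, V' t = ∑ i,
      (2 * max (-(z1 t i)) 0 * (-(G1 t i)) + 2 * max (-(z2 t i)) 0 * (-(G2 t i)) +
        (if (i : ℕ) < n then 2 * max (z1 t i + z2 t i - 1) 0 * (G1 t i + G2 t i)
         else 2 * max (z1 t i - u1 i) 0 * (G1 t i) + 2 * max (z2 t i - u2 i) 0 * (G2 t i))) := by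
    intro t; rw [hV'def]; rfl
  -- nonnegativity facts
  have vt_nonneg : ∀ t i, 0 ≤ vt t i := by
    intro t i
    have := phi_nonneg (-(z1 t i)); have := phi_nonneg (-(z2 t i))
    rw [hvt t i]
    split_ifs
    · have := phi_nonneg (z1 t i + z2 t i - 1); linarith
    · have := phi_nonneg (z1 t i - u1 i); have := phi_nonneg (z2 t i - u2 i); linarith
  have st_nonneg : ∀ t i, 0 ≤ st t i := by
    intro t i
    have h1 : (0:ℝ) ≤ max (-(z1 t i)) 0 := le_max_right _ _
    have h2 : (0:ℝ) ≤ max (-(z2 t i)) 0 := le_max_right _ _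
    rw [hst t i]
    split_ifs
    · have : (0:ℝ) ≤ max (z1 t i + z2 t i - 1) 0 := le_max_right _ _; linarith
    · have := le_max_right (z1 t i - u1 i) (0:ℝ)
      have := le_max_right (z2 t i - u2 i) (0:ℝ); linarith
  have hVpos : ∀ t, 0 ≤ t → 0 ≤ V t := fun t _ => by
    rw [hVt t]; exact Finset.sum_nonneg fun i _ => vt_nonneg t i
  have hS0 : ∀ t, 0 ≤ S t := fun t => by
    rw [hSt t]; exact Finset.sum_nonneg fun i _ => st_nonneg t i
  -- derivative of V
  have hVd : ∀ t, 0 ≤ t → HasDerivAt V (V' t) t := by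
    intro t ht
    rw [hVdef, hV'def, hvtdef]
    apply HasDerivAt.fun_sum
    intro i _
    have h1 : HasDerivAt (fun s => z1 s i) (G1 t i) t := by
      rw [hG1def]; exact hasDerivAt_coord (hsol t ht).1 i
    have h2 : HasDerivAt (fun s => z2 s i) (G2 t i) t := by
      rw [hG2def]; exact hasDerivAt_coord (hsol t ht).2 i
    have d1 : HasDerivAt (fun s => phi (-(z1 s i))) (2 * max (-(z1 t i)) 0 * (-(G1 t i))) t :=
      (hasDerivAt_phi _).comp t h1.neg
    have d2 : HasDerivAt (fun s => phi (-(z2 s i))) (2 * max (-(z2 t i)) 0 * (-(G2 t i))) t :=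
      (hasDerivAt_phi _).comp t h2.neg
    by_cases hi : (i : ℕ) < n
    · have d3 : HasDerivAt (fun s => phi (z1 s i + z2 s i - 1))
          (2 * max (z1 t i + z2 t i - 1) 0 * (G1 t i + G2 t i)) t :=
        (hasDerivAt_phi _).comp t ((h1.add h2).sub_const 1)
      have hd := (d1.add d2).add d3
      simp only [vtF, dtF, if_pos hi]
      exact hd
    · have d3 : HasDerivAt (fun s => phi (z1 s i - u1 i))
          (2 * max (z1 t i - u1 i) 0 * (G1 t i)) t :=
        (hasDerivAt_phi _).comp t (h1.sub_const _)
      have d4 : HasDerivAt (fun s => phi (z2 s i - u2 i))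
          (2 * max (z2 t i - u2 i) 0 * (G2 t i)) t :=
        (hasDerivAt_phi _).comp t (h2.sub_const _)
      have hd := (d1.add d2).add (d3.add d4)
      simp only [vtF, dtF, if_neg hi]
      exact hd
  -- initial condition
  have hV0 : V 0 ≤ 0 := by
    have : V 0 = 0 := by
      rw [hVt 0]
      apply Finset.sum_eq_zero
      intro i _
      obtain ⟨hD1, hD2, hSum⟩ := hinit
      have hz10 := (hD1 i).1
      have hz20 := (hD2 i).1
      rw [hvt 0 i]
      rw [phi_of_nonpos (by linarith), phi_of_nonpos (by linarith)]
      split_ifs with hi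
      · rw [phi_of_nonpos (by linarith [hSum i hi])]; ring
      · rw [phi_of_nonpos (by rw [hu1def]; linarith [(hD1 i).2]),
          phi_of_nonpos (by rw [hu2def]; linarith [(hD2 i).2])]
        ring
    linarith
  -- constants
  set β1 : ℝ := bmass Bf1 Bfi1 with hβ1
  set β2 : ℝ := bmass Bf2 Bfi2 with hβ2
  set Dtr1 : ℝ := ∑ j, Df1 j j with hDtr1def
  set Dtr2 : ℝ := ∑ j, Df2 j j with hDtr2def
  set K : ℝ := 3 + ∑ i, u1 i + ∑ i, u2 i with hKdef
  have hu1nn : ∀ i, 0 ≤ u1 i := fun i => by rw [hu1def]; exact ubound_nonneg hmod1 i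
  have hu2nn : ∀ i, 0 ≤ u2 i := fun i => by rw [hu2def]; exact ubound_nonneg hmod2 i
  have hu1sum : (0:ℝ) ≤ ∑ i, u1 i := Finset.sum_nonneg fun i _ => hu1nn i
  have hu2sum : (0:ℝ) ≤ ∑ i, u2 i := Finset.sum_nonneg fun i _ => hu2nn i
  have hK1 : (1:ℝ) ≤ K := by rw [hKdef]; linarith
  have hu1K : ∀ i, u1 i + 1 ≤ K := by
    intro i
    have := Finset.single_le_sum (f := u1) (fun j _ => hu1nn j) (Finset.mem_univ i)
    rw [hKdef]; linarith
  have hu2K : ∀ i, u2 i + 1 ≤ K := by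
    intro i
    have := Finset.single_le_sum (f := u2) (fun j _ => hu2nn j) (Finset.mem_univ i)
    rw [hKdef]; linarith
  have hb1 : 0 ≤ β1 := bmass_nonneg hmod1.bNonneg hmod1.bfiNonneg
  have hb2 : 0 ≤ β2 := bmass_nonneg hmod2.bNonneg hmod2.bfiNonneg
  have hDtr1p : 0 ≤ Dtr1 := Finset.sum_nonneg fun j _ => (hmod1.dPos j).le
  have hDtr2p : 0 ≤ Dtr2 := Finset.sum_nonneg fun j _ => (hmod2.dPos j).le
  have hD1le : ∀ i, Df1 i i ≤ Dtr1 := fun i =>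
    Finset.single_le_sum (f := fun j => Df1 j j) (fun j _ => (hmod1.dPos j).le) (Finset.mem_univ i)
  have hD2le : ∀ i, Df2 i i ≤ Dtr2 := fun i =>
    Finset.single_le_sum (f := fun j => Df2 j j) (fun j _ => (hmod2.dPos j).le) (Finset.mem_univ i)
  set CA1 : ℝ := 2 * K ^ 2 * β1 + 9 * K * β1 with hCA1
  set CA2 : ℝ := 2 * K ^ 2 * β2 + 9 * K * β2 with hCA2
  set CB1 : ℝ := Dtr1 + 3 * K * β1 with hCB1
  set CB2 : ℝ := Dtr2 + 3 * K * β2 with hCB2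
  set CC1 : ℝ := 4 * β1 * (1 + 4 * N) with hCC1
  set CC2 : ℝ := 4 * β2 * (1 + 4 * N) with hCC2
  have hK0 : (0:ℝ) ≤ K := by linarith
  have hCA1p : 0 ≤ CA1 := by
    rw [hCA1]
    nlinarith only [mul_nonneg (mul_nonneg hK0 hK0) hb1, mul_nonneg hK0 hb1]
  have hCA2p : 0 ≤ CA2 := by
    rw [hCA2]
    nlinarith only [mul_nonneg (mul_nonneg hK0 hK0) hb2, mul_nonneg hK0 hb2]
  have hCB1p : 0 ≤ CB1 := by rw [hCB1]; nlinarith only [hDtr1p, mul_nonneg hK0 hb1]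
  have hCB2p : 0 ≤ CB2 := by rw [hCB2]; nlinarith only [hDtr2p, mul_nonneg hK0 hb2]
  have hN0 : (0:ℝ) ≤ (N:ℝ) := Nat.cast_nonneg N
  have hCC1p : 0 ≤ CC1 := by rw [hCC1]; nlinarith only [hb1, hN0, mul_nonneg hb1 hN0]
  have hCC2p : 0 ≤ CC2 := by rw [hCC2]; nlinarith only [hb2, hN0, mul_nonneg hb2 hN0]
  set Cs : ℝ := CA1 + CA2 + CB1 + CB2 + CC1 + CC2 + 1 with hCs
  have hCsp : 0 < Cs := by
    rw [hCs]
    linarith only [hCA1p, hCA2p, hCB1p, hCB2p, hCC1p, hCC2p]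
  set L : ℝ := 8 * N * Cs + 1 with hL
  have hLp : 0 < L := by rw [hL]; nlinarith only [mul_nonneg hN0 hCsp.le]
  -- the key differential inequality
  have hb : ∀ t, 0 ≤ t → V t ≤ 1 → V' t ≤ L * V t := by
    intro t ht hV1
    rw [hVt t] at hV1
    -- componentwise consequences of V ≤ 1
    have hvle : ∀ i, vt t i ≤ 1 := by
      intro i
      have := Finset.single_le_sum (f := vt t) (fun j _ => vt_nonneg t j) (Finset.mem_univ i)
      linarith only [this, hV1]
    have hz1lb : ∀ i, -1 ≤ z1 t i := by
      intro i
      have h := hvle i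
      have h2 : phi (-(z1 t i)) ≤ 1 := by
        rw [hvt t i] at h
        have := phi_nonneg (-(z2 t i))
        split_ifs at h
        · have := phi_nonneg (z1 t i + z2 t i - 1); linarith
        · have := phi_nonneg (z1 t i - u1 i); have := phi_nonneg (z2 t i - u2 i); linarith
      linarith [le_one_of_phi_le_one h2]
    have hz2lb : ∀ i, -1 ≤ z2 t i := by
      intro i
      have h := hvle i
      have h2 : phi (-(z2 t i)) ≤ 1 := by
        rw [hvt t i] at h
        have := phi_nonneg (-(z1 t i))
        split_ifs at h
        · have := phi_nonneg (z1 t i + z2 t i - 1); linarith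
        · have := phi_nonneg (z1 t i - u1 i); have := phi_nonneg (z2 t i - u2 i); linarith
      linarith [le_one_of_phi_le_one h2]
    have hsum2 : ∀ i : Fin N, (i : ℕ) < n → z1 t i + z2 t i ≤ 2 := by
      intro i hi
      have h := hvle i
      rw [hvt t i, if_pos hi] at h
      have := phi_nonneg (-(z1 t i)); have := phi_nonneg (-(z2 t i))
      have h2 : phi (z1 t i + z2 t i - 1) ≤ 1 := by linarith
      linarith [le_one_of_phi_le_one h2]
    have hup1 : ∀ i : Fin N, n ≤ (i : ℕ) → z1 t i ≤ u1 i + 1 := by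
      intro i hi
      have h := hvle i
      rw [hvt t i, if_neg (by omega : ¬ (i:ℕ) < n)] at h
      have := phi_nonneg (-(z1 t i)); have := phi_nonneg (-(z2 t i))
      have := phi_nonneg (z2 t i - u2 i)
      have h2 : phi (z1 t i - u1 i) ≤ 1 := by linarith
      linarith [le_one_of_phi_le_one h2]
    have hup2 : ∀ i : Fin N, n ≤ (i : ℕ) → z2 t i ≤ u2 i + 1 := by
      intro i hi
      have h := hvle i
      rw [hvt t i, if_neg (by omega : ¬ (i:ℕ) < n)] at h
      have := phi_nonneg (-(z1 t i)); have := phi_nonneg (-(z2 t i))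
      have := phi_nonneg (z1 t i - u1 i)
      have h2 : phi (z2 t i - u2 i) ≤ 1 := by linarith
      linarith [le_one_of_phi_le_one h2]
    -- parts of S
    have hstle : ∀ i, st t i ≤ S t := by
      intro i
      rw [hSt t]
      exact Finset.single_le_sum (f := st t) (fun j _ => st_nonneg t j) (Finset.mem_univ i)
    have hs1 : ∀ i, max (-(z1 t i)) 0 ≤ S t := by
      intro i
      refine le_trans ?_ (hstle i)
      have h2 : (0:ℝ) ≤ max (-(z2 t i)) 0 := le_max_right _ _
      rw [hst t i]
      split_ifs
      · have : (0:ℝ) ≤ max (z1 t i + z2 t i - 1) 0 := le_max_right _ _; linarith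
      · have := le_max_right (z1 t i - u1 i) (0:ℝ)
        have := le_max_right (z2 t i - u2 i) (0:ℝ); linarith
    have hs2 : ∀ i, max (-(z2 t i)) 0 ≤ S t := by
      intro i
      refine le_trans ?_ (hstle i)
      have h2 : (0:ℝ) ≤ max (-(z1 t i)) 0 := le_max_right _ _
      rw [hst t i]
      split_ifs
      · have : (0:ℝ) ≤ max (z1 t i + z2 t i - 1) 0 := le_max_right _ _; linarith
      · have := le_max_right (z1 t i - u1 i) (0:ℝ)
        have := le_max_right (z2 t i - u2 i) (0:ℝ); linarith
    have hssum : ∀ i : Fin N, (i : ℕ) < n → max (z1 t i + z2 t i - 1) 0 ≤ S t := by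
      intro i hi
      refine le_trans ?_ (hstle i)
      rw [hst t i, if_pos hi]
      have h1 : (0:ℝ) ≤ max (-(z1 t i)) 0 := le_max_right _ _
      have h2 : (0:ℝ) ≤ max (-(z2 t i)) 0 := le_max_right _ _
      linarith
    have hsu1 : ∀ i : Fin N, n ≤ (i : ℕ) → max (z1 t i - u1 i) 0 ≤ S t := by
      intro i hi
      refine le_trans ?_ (hstle i)
      rw [hst t i, if_neg (by omega : ¬ (i:ℕ) < n)]
      have h1 : (0:ℝ) ≤ max (-(z1 t i)) 0 := le_max_right _ _
      have h2 : (0:ℝ) ≤ max (-(z2 t i)) 0 := le_max_right _ _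
      have h3 : (0:ℝ) ≤ max (z2 t i - u2 i) 0 := le_max_right _ _
      linarith
    have hsu2 : ∀ i : Fin N, n ≤ (i : ℕ) → max (z2 t i - u2 i) 0 ≤ S t := by
      intro i hi
      refine le_trans ?_ (hstle i)
      rw [hst t i, if_neg (by omega : ¬ (i:ℕ) < n)]
      have h1 : (0:ℝ) ≤ max (-(z1 t i)) 0 := le_max_right _ _
      have h2 : (0:ℝ) ≤ max (-(z2 t i)) 0 := le_max_right _ _
      have h3 : (0:ℝ) ≤ max (z1 t i - u1 i) 0 := le_max_right _ _
      linarith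
    -- S ≤ 4N
    have hSle : S t ≤ 4 * N := by
      have hterm : ∀ i : Fin N, st t i ≤ 4 := by
        intro i
        have m1 : max (-(z1 t i)) 0 ≤ 1 := max_le (by linarith [hz1lb i]) zero_le_one
        have m2 : max (-(z2 t i)) 0 ≤ 1 := max_le (by linarith [hz2lb i]) zero_le_one
        rw [hst t i]
        split_ifs with hi
        · have m3 : max (z1 t i + z2 t i - 1) 0 ≤ 1 :=
            max_le (by linarith [hsum2 i hi]) zero_le_one
          linarith
        · have hi' : n ≤ (i:ℕ) := by omega
          have m3 : max (z1 t i - u1 i) 0 ≤ 1 := max_le (by linarith [hup1 i hi']) zero_le_one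
          have m4 : max (z2 t i - u2 i) 0 ≤ 1 := max_le (by linarith [hup2 i hi']) zero_le_one
          linarith
      have h4 : S t ≤ ∑ _i : Fin N, (4:ℝ) := by
        rw [hSt t]; exact Finset.sum_le_sum fun i _ => hterm i
      rw [Finset.sum_const, Finset.card_univ, Fintype.card_fin] at h4
      simp only [nsmul_eq_mul] at h4
      linarith only [h4]
    -- coordinate upper bounds
    have hz1K : ∀ i, z1 t i ≤ K := by
      intro i
      rcases lt_or_ge (i : ℕ) n with hi | hi
      · have := hsum2 i hi; have := hz2lb i; rw [hKdef]; linarith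
      · have := hup1 i hi; linarith [hu1K i]
    have hz2K : ∀ i, z2 t i ≤ K := by
      intro i
      rcases lt_or_ge (i : ℕ) n with hi | hi
      · have := hsum2 i hi; have := hz1lb i; rw [hKdef]; linarith
      · have := hup2 i hi; linarith [hu2K i]
    have hxln1 : ∀ q : Fin N, (q : ℕ) < n → z1 t q ≤ 1 + 2 * S t := by
      intro q hq
      have h1 : z1 t q + z2 t q - 1 ≤ max (z1 t q + z2 t q - 1) 0 := le_max_left _ _
      have h2 : -(z2 t q) ≤ max (-(z2 t q)) 0 := le_max_left _ _
      linarith [hssum q hq, hs2 q]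
    have hxln2 : ∀ q : Fin N, (q : ℕ) < n → z2 t q ≤ 1 + 2 * S t := by
      intro q hq
      have h1 : z1 t q + z2 t q - 1 ≤ max (z1 t q + z2 t q - 1) 0 := le_max_left _ _
      have h2 : -(z1 t q) ≤ max (-(z1 t q)) 0 := le_max_left _ _
      linarith [hssum q hq, hs1 q]
    have hssum' : ∀ q : Fin N, (q : ℕ) < n → max (z2 t q + z1 t q - 1) 0 ≤ S t := by
      intro q hq
      rw [show z2 t q + z1 t q - 1 = z1 t q + z2 t q - 1 by ring]
      exact hssum q hq
    -- per-coordinate bound of V' terms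
    have hterm : ∀ i : Fin N,
        (2 * max (-(z1 t i)) 0 * (-(G1 t i)) + 2 * max (-(z2 t i)) 0 * (-(G2 t i)) +
          (if (i : ℕ) < n then 2 * max (z1 t i + z2 t i - 1) 0 * (G1 t i + G2 t i)
           else 2 * max (z1 t i - u1 i) 0 * (G1 t i) + 2 * max (z2 t i - u2 i) 0 * (G2 t i)))
        ≤ 2 * Cs * S t * st t i := by
      intro i
      have e1 : max (-(z1 t i)) 0 * (-(G1 t i)) ≤ max (-(z1 t i)) 0 * (Cs * S t) := by
        apply aux_prod (le_max_right _ _)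
        intro hpos
        have hneg : z1 t i < 0 := by have := pos_max_imp hpos; linarith
        have := keyA hmod1 (z1 t) (z2 t) (S t) K hK1 (hS0 t) hz1K hs1 hz1lb hz2lb hssum i hneg
        rw [← hβ1, ← hCA1] at this
        have hCsS : CA1 * S t ≤ Cs * S t := by
          apply mul_le_mul_of_nonneg_right _ (hS0 t)
          rw [hCs]
          linarith only [hCA1p, hCA2p, hCB1p, hCB2p, hCC1p, hCC2p]
        rw [hG1def]; dsimp only; linarith
      have e2 : max (-(z2 t i)) 0 * (-(G2 t i)) ≤ max (-(z2 t i)) 0 * (Cs * S t) := by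
        apply aux_prod (le_max_right _ _)
        intro hpos
        have hneg : z2 t i < 0 := by have := pos_max_imp hpos; linarith
        have := keyA hmod2 (z2 t) (z1 t) (S t) K hK1 (hS0 t) hz2K hs2 hz2lb hz1lb hssum' i hneg
        rw [← hβ2, ← hCA2] at this
        have hCsS : CA2 * S t ≤ Cs * S t := by
          apply mul_le_mul_of_nonneg_right _ (hS0 t)
          rw [hCs]
          linarith only [hCA1p, hCA2p, hCB1p, hCB2p, hCC1p, hCC2p]
        rw [hG2def]; dsimp only; linarith
      by_cases hi : (i : ℕ) < n
      · rw [if_pos hi]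
        have e3 : max (z1 t i + z2 t i - 1) 0 * (G1 t i + G2 t i) ≤
            max (z1 t i + z2 t i - 1) 0 * (Cs * S t) := by
          apply aux_prod (le_max_right _ _)
          intro hpos
          have hviol : 1 < z1 t i + z2 t i := by have := pos_max_imp hpos; linarith
          have k1 := keyB hmod1 (z1 t) (z2 t) (S t) K Dtr1 i hK1 (hS0 t) (hD1le i)
            hz1K hs1 hi hviol (hsum2 i hi)
          have k2 := keyB hmod2 (z2 t) (z1 t) (S t) K Dtr2 i hK1 (hS0 t) (hD2le i)
            hz2K hs2 hi (by linarith) (by linarith [hsum2 i hi])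
          rw [← hβ1, ← hCB1] at k1
          rw [← hβ2, ← hCB2] at k2
          have hCsS : CB1 * S t + CB2 * S t ≤ Cs * S t := by
            have hcc : CB1 + CB2 ≤ Cs := by
              rw [hCs]
              linarith only [hCA1p, hCA2p, hCC1p, hCC2p]
            nlinarith only [hS0 t, hcc]
          rw [hG1def, hG2def]; dsimp only; linarith
        rw [hst t i, if_pos hi]
        nlinarith only [e1, e2, e3]
      · rw [if_neg hi]
        have hi' : n ≤ (i : ℕ) := by omega
        have e4 : max (z1 t i - u1 i) 0 * (G1 t i) ≤ max (z1 t i - u1 i) 0 * (Cs * S t) := by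
          apply aux_prod (le_max_right _ _)
          intro hpos
          have hviol : u1 i < z1 t i := by have := pos_max_imp hpos; linarith
          rw [hu1def] at hviol
          have := keyC hmod1 (z1 t) (z2 t) (S t) (4 * N) (hS0 t) hSle hz1lb hxln1 i hi' hviol
          rw [← hβ1, ← hCC1] at this
          have hCsS : CC1 * S t ≤ Cs * S t := by
            apply mul_le_mul_of_nonneg_right _ (hS0 t)
            rw [hCs]; linarith
          rw [hG1def]; dsimp only; linarith
        have e5 : max (z2 t i - u2 i) 0 * (G2 t i) ≤ max (z2 t i - u2 i) 0 * (Cs * S t) := by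
          apply aux_prod (le_max_right _ _)
          intro hpos
          have hviol : u2 i < z2 t i := by have := pos_max_imp hpos; linarith
          rw [hu2def] at hviol
          have := keyC hmod2 (z2 t) (z1 t) (S t) (4 * N) (hS0 t) hSle hz2lb hxln2 i hi' hviol
          rw [← hβ2, ← hCC2] at this
          have hCsS : CC2 * S t ≤ Cs * S t := by
            apply mul_le_mul_of_nonneg_right _ (hS0 t)
            rw [hCs]; linarith
          rw [hG2def]; dsimp only; linarith
        rw [hst t i, if_neg (by omega : ¬ (i:ℕ) < n)]
        nlinarith only [e1, e2, e4, e5]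
    -- sum up
    have hsum : V' t ≤ 2 * Cs * S t * S t := by
      have h1 : V' t ≤ ∑ i, 2 * Cs * S t * st t i := by
        rw [hV't t]; exact Finset.sum_le_sum fun i _ => hterm i
      rw [← Finset.mul_sum, ← hSt t] at h1
      exact h1
    -- Cauchy–Schwarz: S² ≤ 4 N V
    have hsv : ∀ i, (st t i) ^ 2 ≤ 4 * vt t i := by
      intro i
      rw [hst t i, hvt t i]
      simp only [phi]
      split_ifs
      · nlinarith only [sq_nonneg (max (-(z1 t i)) 0 - max (-(z2 t i)) 0),
          sq_nonneg (max (-(z1 t i)) 0 - max (z1 t i + z2 t i - 1) 0),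
          sq_nonneg (max (-(z2 t i)) 0 - max (z1 t i + z2 t i - 1) 0),
          sq_nonneg (max (-(z1 t i)) 0), sq_nonneg (max (-(z2 t i)) 0),
          sq_nonneg (max (z1 t i + z2 t i - 1) 0)]
      · nlinarith only [sq_nonneg (max (-(z1 t i)) 0 - max (-(z2 t i)) 0),
          sq_nonneg (max (-(z1 t i)) 0 - max (z1 t i - u1 i) 0),
          sq_nonneg (max (-(z1 t i)) 0 - max (z2 t i - u2 i) 0),
          sq_nonneg (max (-(z2 t i)) 0 - max (z1 t i - u1 i) 0),
          sq_nonneg (max (-(z2 t i)) 0 - max (z2 t i - u2 i) 0),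
          sq_nonneg (max (z1 t i - u1 i) 0 - max (z2 t i - u2 i) 0)]
    have hcs : (S t) ^ 2 ≤ (N : ℝ) * ∑ i, (st t i) ^ 2 := by
      rw [hSt t]
      have := sq_sum_le_card_mul_sum_sq (s := (Finset.univ : Finset (Fin N))) (f := st t)
      rw [Finset.card_univ, Fintype.card_fin] at this
      exact_mod_cast this
    have hSV : (S t) ^ 2 ≤ 4 * N * V t := by
      have h2 : ∑ i, (st t i) ^ 2 ≤ ∑ i, 4 * vt t i := Finset.sum_le_sum fun i _ => hsv i
      rw [← Finset.mul_sum] at h2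
      have h3 : (N:ℝ) * ∑ i, (st t i)^2 ≤ (N:ℝ) * (4 * V t) := by
        rw [hVt t]; exact mul_le_mul_of_nonneg_left h2 hN0
      calc (S t)^2 ≤ (N:ℝ) * ∑ i, (st t i)^2 := hcs
        _ ≤ (N:ℝ) * (4 * V t) := h3
        _ = 4 * N * V t := by ring
    calc V' t ≤ 2 * Cs * S t * S t := hsum
      _ = 2 * Cs * (S t)^2 := by ring
      _ ≤ 2 * Cs * (4 * N * V t) := by nlinarith only [hSV, hCsp]
      _ ≤ L * V t := by rw [hL]; nlinarith only [hVpos t ht]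
  -- conclude V ≡ 0
  have hVzero := eq_zero_of_deriv_le_mul hLp hVd hV0 hVpos hb
  -- extract constraints
  intro t ht
  have hvt0 : ∀ i, vt t i = 0 := by
    have h := hVzero t ht
    rw [hVt t] at h
    intro i
    exact (Finset.sum_eq_zero_iff_of_nonneg (fun j _ => vt_nonneg t j)).mp h i (Finset.mem_univ i)
  have hz1nn : ∀ i, 0 ≤ z1 t i := by
    intro i
    have h := hvt0 i
    have h1 : phi (-(z1 t i)) = 0 := by
      rw [hvt t i] at h
      have p1 := phi_nonneg (-(z1 t i)); have p2 := phi_nonneg (-(z2 t i))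
      split_ifs at h
      · have := phi_nonneg (z1 t i + z2 t i - 1); linarith
      · have := phi_nonneg (z1 t i - u1 i); have := phi_nonneg (z2 t i - u2 i); linarith
    linarith [nonpos_of_phi_eq_zero h1]
  have hz2nn : ∀ i, 0 ≤ z2 t i := by
    intro i
    have h := hvt0 i
    have h1 : phi (-(z2 t i)) = 0 := by
      rw [hvt t i] at h
      have p1 := phi_nonneg (-(z1 t i)); have p2 := phi_nonneg (-(z2 t i))
      split_ifs at h
      · have := phi_nonneg (z1 t i + z2 t i - 1); linarith
      · have := phi_nonneg (z1 t i - u1 i); have := phi_nonneg (z2 t i - u2 i); linarith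
    linarith [nonpos_of_phi_eq_zero h1]
  have hsum1 : ∀ i : Fin N, (i : ℕ) < n → z1 t i + z2 t i ≤ 1 := by
    intro i hi
    have h := hvt0 i
    rw [hvt t i, if_pos hi] at h
    have p1 := phi_nonneg (-(z1 t i)); have p2 := phi_nonneg (-(z2 t i))
    have h1 : phi (z1 t i + z2 t i - 1) = 0 := by
      have := phi_nonneg (z1 t i + z2 t i - 1); linarith
    linarith [nonpos_of_phi_eq_zero h1]
  have hub1 : ∀ i : Fin N, n ≤ (i : ℕ) → z1 t i ≤ u1 i := by
    intro i hi
    have h := hvt0 i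
    rw [hvt t i, if_neg (by omega : ¬ (i:ℕ) < n)] at h
    have p1 := phi_nonneg (-(z1 t i)); have p2 := phi_nonneg (-(z2 t i))
    have p4 := phi_nonneg (z2 t i - u2 i)
    have h1 : phi (z1 t i - u1 i) = 0 := by
      have := phi_nonneg (z1 t i - u1 i); linarith
    linarith [nonpos_of_phi_eq_zero h1]
  have hub2 : ∀ i : Fin N, n ≤ (i : ℕ) → z2 t i ≤ u2 i := by
    intro i hi
    have h := hvt0 i
    rw [hvt t i, if_neg (by omega : ¬ (i:ℕ) < n)] at h
    have p1 := phi_nonneg (-(z1 t i)); have p2 := phi_nonneg (-(z2 t i))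
    have p3 := phi_nonneg (z1 t i - u1 i)
    have h1 : phi (z2 t i - u2 i) = 0 := by
      have := phi_nonneg (z2 t i - u2 i); linarith
    linarith [nonpos_of_phi_eq_zero h1]
  refine ⟨fun i => ⟨hz1nn i, ?_⟩, fun i => ⟨hz2nn i, ?_⟩, fun i hi => hsum1 i hi⟩
  · rw [show ubound n Df1 Bf1 Bfi1 i = u1 i from by rw [hu1def]]
    rcases lt_or_ge (i : ℕ) n with hi | hi
    · rw [show u1 i = 1 from by rw [hu1def]; exact ubound_eq_one i hi]
      linarith [hsum1 i hi, hz2nn i]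
    · exact hub1 i hi
  · rw [show ubound n Df2 Bf2 Bfi2 i = u2 i from by rw [hu2def]]
    rcases lt_or_ge (i : ℕ) n with hi | hi
    · rw [show u2 i = 1 from by rw [hu2def]; exact ubound_eq_one i hi]
      linarith [hsum1 i hi, hz1nn i]
    · exact hub2 i hi

end Stmt10Aux
namespace Stmt10Aux

open Real Set Filter Topology Matrix

variable {n N : ℕ}

set_option maxHeartbeats 1000000 in
lemma bi_comparison {Df1 Bf1 : Matrix (Fin N) (Fin N) ℝ} {Bfi1 : Fin N → Matrix (Fin N) (Fin N) ℝ}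
    {Df2 Bf2 : Matrix (Fin N) (Fin N) ℝ} {Bfi2 : Fin N → Matrix (Fin N) (Fin N) ℝ}
    (hmod1 : ModelHyp n Df1 Bf1 Bfi1) (hmod2 : ModelHyp n Df2 Bf2 Bfi2)
    (z1 z2 : ℝ → Fin N → ℝ)
    (hsol : IsSolutionBi n Df1 Bf1 Bfi1 Df2 Bf2 Bfi2 z1 z2)
    (hinit : InDbarBi n Df1 Bf1 Bfi1 Df2 Bf2 Bfi2 (z1 0) (z2 0))
    (zh : ℝ → Fin N → ℝ) (hzh : IsSolution (Gfield n Df1 Bf1 Bfi1) zh)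
    (h0 : zh 0 = z1 0) : ∀ t, 0 ≤ t → ∀ i, z1 t i ≤ zh t i := by
  classical
  have hbar := bi_invariance hmod1 hmod2 z1 z2 hsol hinit
  -- the pair (zh, 0) is a bi-virus solution
  have hsolh : IsSolutionBi n Df1 Bf1 Bfi1 Df2 Bf2 Bfi2 zh (fun _ => 0) := by
    intro t ht
    constructor
    · have h := hzh t ht
      rw [Gfield_eq_GBi] at h
      exact h
    · rw [GBi_zero]
      exact hasDerivAt_const t 0
  have hinith : InDbarBi n Df1 Bf1 Bfi1 Df2 Bf2 Bfi2 (zh 0) ((fun _ : ℝ => (0 : Fin N → ℝ)) 0) := by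
    refine ⟨?_, ?_, ?_⟩
    · rw [h0]; exact hinit.1
    · intro i
      exact ⟨le_refl 0, ubound_nonneg hmod2 i⟩
    · intro i hi
      rw [h0]
      have h1 := (hinit.1 i).2
      rw [ubound_eq_one i hi] at h1
      simpa using h1
  have hbarh := bi_invariance hmod1 hmod2 zh (fun _ => 0) hsolh hinith
  -- comparison Lyapunov function
  obtain ⟨W, hWdef⟩ : ∃ v : ℝ → ℝ, v = fun t => ∑ i, phi (z1 t i - zh t i) := ⟨_, rfl⟩
  obtain ⟨Sw, hSwdef⟩ : ∃ v : ℝ → ℝ, v = fun t => ∑ i, max (z1 t i - zh t i) 0 := ⟨_, rfl⟩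
  obtain ⟨W', hW'def⟩ : ∃ v : ℝ → ℝ, v = fun t => ∑ i,
      2 * max (z1 t i - zh t i) 0 *
        (GBi n Df1 Bf1 Bfi1 (z1 t) (z2 t) i - Gfield n Df1 Bf1 Bfi1 (zh t) i) := ⟨_, rfl⟩
  have hWt : ∀ t, W t = ∑ i, phi (z1 t i - zh t i) := fun t => by rw [hWdef]
  have hSwt : ∀ t, Sw t = ∑ i, max (z1 t i - zh t i) 0 := fun t => by rw [hSwdef]
  -- constants
  set β1 : ℝ := bmass Bf1 Bfi1 with hβ1
  have hb1 : 0 ≤ β1 := bmass_nonneg hmod1.bNonneg hmod1.bfiNonneg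
  set U : ℝ := 1 + ∑ i, ubound n Df1 Bf1 Bfi1 i with hUdef
  have husum : (0:ℝ) ≤ ∑ i, ubound n Df1 Bf1 Bfi1 i :=
    Finset.sum_nonneg fun i _ => ubound_nonneg hmod1 i
  have hU1 : (1:ℝ) ≤ U := by rw [hUdef]; linarith
  have hu : ∀ q, ubound n Df1 Bf1 Bfi1 q ≤ U := by
    intro q
    have h1 := Finset.single_le_sum (f := ubound n Df1 Bf1 Bfi1)
      (fun j _ => ubound_nonneg hmod1 j) (Finset.mem_univ q)
    have h2 := ubound_nonneg hmod1 q
    rw [hUdef]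
    linarith
  set Cf : ℝ := 3 * U * β1 with hCf
  have hCf0 : 0 ≤ Cf := by
    rw [hCf]
    nlinarith only [mul_nonneg (by linarith : (0:ℝ) ≤ U) hb1]
  set L : ℝ := 2 * N * Cf + 1 with hL
  have hN0 : (0:ℝ) ≤ (N:ℝ) := Nat.cast_nonneg N
  have hLp : 0 < L := by rw [hL]; nlinarith only [mul_nonneg hN0 hCf0]
  have hSw0 : ∀ t, 0 ≤ Sw t := fun t => by
    rw [hSwt t]; exact Finset.sum_nonneg fun i _ => le_max_right _ _
  -- derivative
  have hWd : ∀ t, 0 ≤ t → HasDerivAt W (W' t) t := by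
    intro t ht
    rw [hWdef, hW'def]
    apply HasDerivAt.fun_sum
    intro i _
    have h1 := hasDerivAt_coord (hsol t ht).1 i
    have h2 := hasDerivAt_coord (hzh t ht) i
    exact (hasDerivAt_phi _).comp t (h1.sub h2)
  have hW0 : W 0 ≤ 0 := by
    rw [hWt 0]
    have : ∀ i : Fin N, phi (z1 0 i - zh 0 i) = 0 := by
      intro i
      rw [h0]
      exact phi_of_nonpos (by simp)
    rw [Finset.sum_congr rfl fun i _ => this i]
    simp
  have hWpos : ∀ t, 0 ≤ t → 0 ≤ W t := fun t _ => by
    rw [hWt t]; exact Finset.sum_nonneg fun i _ => phi_nonneg _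
  -- differential inequality
  have hbW : ∀ t, 0 ≤ t → W t ≤ 1 → W' t ≤ L * W t := by
    intro t ht _
    obtain ⟨hD1, hD2, hSum⟩ := hbar t ht
    have hDh := (hbarh t ht).1
    have hSwm : ∀ q, max (z1 t q - zh t q) 0 ≤ Sw t := by
      intro q
      rw [hSwt t]
      exact Finset.single_le_sum (f := fun j => max (z1 t j - zh t j) 0)
        (fun j _ => le_max_right _ _) (Finset.mem_univ q)
    have hterm : ∀ i : Fin N,
        2 * max (z1 t i - zh t i) 0 *
          (GBi n Df1 Bf1 Bfi1 (z1 t) (z2 t) i - Gfield n Df1 Bf1 Bfi1 (zh t) i) ≤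
        2 * Cf * Sw t * max (z1 t i - zh t i) 0 := by
      intro i
      have e1 : max (z1 t i - zh t i) 0 *
          (GBi n Df1 Bf1 Bfi1 (z1 t) (z2 t) i - Gfield n Df1 Bf1 Bfi1 (zh t) i) ≤
          max (z1 t i - zh t i) 0 * (Cf * Sw t) := by
        apply aux_prod (le_max_right _ _)
        intro hpos
        have hwi : zh t i < z1 t i := by have := pos_max_imp hpos; linarith
        have := keyComp hmod1 (z1 t) (z2 t) (zh t) (Sw t) U hU1 hu (hSw0 t)
          (fun q => (hD1 q).1) (fun q => (hD1 q).2) (fun q => (hD2 q).1)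
          (fun q hq => hSum q hq) (fun q => (hDh q).1) (fun q => (hDh q).2)
          hSwm i hwi
        rw [Gfield_eq_GBi]
        rw [← hβ1, ← hCf] at this
        linarith only [this]
      nlinarith only [e1]
    have hsum : W' t ≤ 2 * Cf * Sw t * Sw t := by
      have h1 : W' t ≤ ∑ i, 2 * Cf * Sw t * max (z1 t i - zh t i) 0 := by
        rw [hW'def]
        exact Finset.sum_le_sum fun i _ => hterm i
      rw [← Finset.mul_sum, ← hSwt t] at h1
      exact h1
    have hcs : (Sw t) ^ 2 ≤ (N : ℝ) * ∑ i, (max (z1 t i - zh t i) 0) ^ 2 := by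
      rw [hSwt t]
      have := sq_sum_le_card_mul_sum_sq (s := (Finset.univ : Finset (Fin N)))
        (f := fun i => max (z1 t i - zh t i) 0)
      rw [Finset.card_univ, Fintype.card_fin] at this
      exact_mod_cast this
    have hWsq : (Sw t) ^ 2 ≤ (N:ℝ) * W t := by
      have h2 : ∑ i, (max (z1 t i - zh t i) 0) ^ 2 = W t := by
        rw [hWt t]
        exact Finset.sum_congr rfl fun i _ => rfl
      rw [h2] at hcs
      exact hcs
    calc W' t ≤ 2 * Cf * Sw t * Sw t := hsum
      _ = 2 * Cf * (Sw t)^2 := by ring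
      _ ≤ 2 * Cf * ((N:ℝ) * W t) := by nlinarith only [hWsq, hCf0]
      _ ≤ L * W t := by rw [hL]; nlinarith only [hWpos t ht]
  have hWzero := eq_zero_of_deriv_le_mul hLp hWd hW0 hWpos hbW
  intro t ht i
  have h := hWzero t ht
  rw [hWt t] at h
  have h1 : phi (z1 t i - zh t i) = 0 :=
    (Finset.sum_eq_zero_iff_of_nonneg (fun j _ => phi_nonneg _)).mp h i (Finset.mem_univ i)
  linarith [nonpos_of_phi_eq_zero h1]

end Stmt10Aux

/-- general properties of the bi-virus higher-order SIWS model: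
(i) `D̄_bi` is positively invariant; (ii) `(0,0)` is an equilibrium;
(iii) each virus is upper bounded by its single-virus counterpart. -/
theorem stmt10 (n m : ℕ) (hn : 0 < n)
    (Df1 Bf1 : Matrix (Fin (n + m)) (Fin (n + m)) ℝ)
    (Bfi1 : Fin (n + m) → Matrix (Fin (n + m)) (Fin (n + m)) ℝ)
    (Df2 Bf2 : Matrix (Fin (n + m)) (Fin (n + m)) ℝ)
    (Bfi2 : Fin (n + m) → Matrix (Fin (n + m)) (Fin (n + m)) ℝ)
    (hmod1 : ModelHyp n Df1 Bf1 Bfi1) (hmod2 : ModelHyp n Df2 Bf2 Bfi2) :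
    (∀ z1 z2 : ℝ → Fin (n + m) → ℝ,
        IsSolutionBi n Df1 Bf1 Bfi1 Df2 Bf2 Bfi2 z1 z2 →
        InDbarBi n Df1 Bf1 Bfi1 Df2 Bf2 Bfi2 (z1 0) (z2 0) →
        ∀ t : ℝ, 0 ≤ t → InDbarBi n Df1 Bf1 Bfi1 Df2 Bf2 Bfi2 (z1 t) (z2 t)) ∧
    (GBi n Df1 Bf1 Bfi1 0 0 = 0 ∧ GBi n Df2 Bf2 Bfi2 0 0 = 0) ∧
    (∀ z1 z2 : ℝ → Fin (n + m) → ℝ,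
        IsSolutionBi n Df1 Bf1 Bfi1 Df2 Bf2 Bfi2 z1 z2 →
        InDbarBi n Df1 Bf1 Bfi1 Df2 Bf2 Bfi2 (z1 0) (z2 0) →
        (∀ zh : ℝ → Fin (n + m) → ℝ, IsSolution (Gfield n Df1 Bf1 Bfi1) zh →
          zh 0 = z1 0 → ∀ t : ℝ, 0 ≤ t → ∀ i, z1 t i ≤ zh t i) ∧
        (∀ zh : ℝ → Fin (n + m) → ℝ, IsSolution (Gfield n Df2 Bf2 Bfi2) zh →
          zh 0 = z2 0 → ∀ t : ℝ, 0 ≤ t → ∀ i, z2 t i ≤ zh t i)) := by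
  refine ⟨?_, ⟨Stmt10Aux.GBi_zero _ _ _ _, Stmt10Aux.GBi_zero _ _ _ _⟩, ?_⟩
  · intro z1 z2 hsol hinit t ht
    exact Stmt10Aux.bi_invariance hmod1 hmod2 z1 z2 hsol hinit t ht
  · intro z1 z2 hsol hinit
    constructor
    · intro zh hzh h0 t ht i
      exact Stmt10Aux.bi_comparison hmod1 hmod2 z1 z2 hsol hinit zh hzh h0 t ht i
    · intro zh hzh h0 t ht i
      have hsol2 : IsSolutionBi n Df2 Bf2 Bfi2 Df1 Bf1 Bfi1 z2 z1 := fun t ht =>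
        ⟨(hsol t ht).2, (hsol t ht).1⟩
      have hinit2 : InDbarBi n Df2 Bf2 Bfi2 Df1 Bf1 Bfi1 (z2 0) (z1 0) :=
        ⟨hinit.2.1, hinit.1, fun i hi => by linarith [hinit.2.2 i hi]⟩
      exact Stmt10Aux.bi_comparison hmod2 hmod1 z2 z1 hsol2 hinit2 zh hzh h0 t ht i
end
end

section
/- Suppose B_f^ν is irreducible and ρ((D_f^ν)⁻¹ B_f^ν) > 1 for both ν = 1 and ν = 2, and let z^{1*} ≫ 0 and z^{2*} ≫ 0 be equilibria of the single-virus counterparts of virus 1 and virus 2 respectively (such equilibria exist). If s(−D_f^1 + (I − Z(z^{2*})) B_f^1) > 0 and s(−D_f^2 + (I − Z(z^{1*})) B_f^2) > 0, then the bi-virus higher-order SIWS model has a coexisting equilibrium (ẑ^1, ẑ^2) with ẑ^1 ≫ 0, ẑ^2 ≫ 0, and ẑ^1_i + ẑ^2_i ≤ 1 for every i ≤ n. -/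
open Matrix Filter Topology MeasureTheory

noncomputable section

namespace S14

def ram (x : ℝ) : ℝ := max x 0

lemma ram_nonneg (x : ℝ) : 0 ≤ ram x := le_max_right _ _
lemma ram_mono {x y : ℝ} (h : x ≤ y) : ram x ≤ ram y := max_le_max h le_rfl
lemma le_ram (x : ℝ) : x ≤ ram x := le_max_left _ _
lemma ram_of_nonneg {x : ℝ} (h : 0 ≤ x) : ram x = x := max_eq_left h
lemma ram_add_le {a d : ℝ} (hd : 0 ≤ d) : ram (a + d) ≤ ram a + d := by
  unfold ram
  exact max_le (by have := le_max_left a (0:ℝ); linarith)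
    (by have := le_max_right a (0:ℝ); linarith)
lemma ram_one : ram 1 = 1 := max_eq_left zero_le_one

variable {N : ℕ}

/-- `gg = B z + H(z)` componentwise. -/
def gg (Bf : Matrix (Fin N) (Fin N) ℝ) (Bfi : Fin N → Matrix (Fin N) (Fin N) ℝ)
    (z : Fin N → ℝ) (i : Fin N) : ℝ := Bf.mulVec z i + Hquad Bfi z i

/-- coefficient `ram(1 - [i<n](z_i + w_i))`. -/
def coefr (n : ℕ) (z w : Fin N → ℝ) (i : Fin N) : ℝ :=
  ram (1 - (if (i : ℕ) < n then z i + w i else 0))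

/-- The monotone iteration map, componentwise. -/
def Tm (n : ℕ) (Df Bf : Matrix (Fin N) (Fin N) ℝ)
    (Bfi : Fin N → Matrix (Fin N) (Fin N) ℝ) (c : ℝ) (z w : Fin N → ℝ) (i : Fin N) : ℝ :=
  (c * z i + coefr n z w i * gg Bf Bfi z i) / (Df i i + c)

lemma mulVec_nonneg {Bf : Matrix (Fin N) (Fin N) ℝ} (hB : ∀ p q, 0 ≤ Bf p q)
    {z : Fin N → ℝ} (hz : ∀ i, 0 ≤ z i) (i : Fin N) : 0 ≤ Bf.mulVec z i := by
  simp only [Matrix.mulVec, dotProduct]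
  exact Finset.sum_nonneg fun j _ => mul_nonneg (hB i j) (hz j)

lemma mulVec_mono {Bf : Matrix (Fin N) (Fin N) ℝ} (hB : ∀ p q, 0 ≤ Bf p q)
    {z z' : Fin N → ℝ} (hzz : ∀ i, z i ≤ z' i) (i : Fin N) :
    Bf.mulVec z i ≤ Bf.mulVec z' i := by
  simp only [Matrix.mulVec, dotProduct]
  exact Finset.sum_le_sum fun j _ => mul_le_mul_of_nonneg_left (hzz j) (hB i j)

lemma Hquad_nonneg {Bfi : Fin N → Matrix (Fin N) (Fin N) ℝ} (hBfi : ∀ i p q, 0 ≤ Bfi i p q)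
    {z : Fin N → ℝ} (hz : ∀ i, 0 ≤ z i) (i : Fin N) : 0 ≤ Hquad Bfi z i := by
  simp only [Hquad, Matrix.mulVec, dotProduct]
  exact Finset.sum_nonneg fun p _ => mul_nonneg (hz p)
    (Finset.sum_nonneg fun q _ => mul_nonneg (hBfi i p q) (hz q))

lemma Hquad_mono {Bfi : Fin N → Matrix (Fin N) (Fin N) ℝ} (hBfi : ∀ i p q, 0 ≤ Bfi i p q)
    {z z' : Fin N → ℝ} (hz : ∀ i, 0 ≤ z i) (hzz : ∀ i, z i ≤ z' i) (i : Fin N) :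
    Hquad Bfi z i ≤ Hquad Bfi z' i := by
  simp only [Hquad, dotProduct]
  refine Finset.sum_le_sum fun p _ => ?_
  have h1 : 0 ≤ (Bfi i).mulVec z p := mulVec_nonneg (hBfi i) hz p
  have h2 : (Bfi i).mulVec z p ≤ (Bfi i).mulVec z' p := mulVec_mono (hBfi i) hzz p
  exact mul_le_mul (hzz p) h2 h1 (le_trans (hz p) (hzz p))

lemma gg_nonneg {Bf : Matrix (Fin N) (Fin N) ℝ} {Bfi : Fin N → Matrix (Fin N) (Fin N) ℝ}
    (hB : ∀ p q, 0 ≤ Bf p q) (hBfi : ∀ i p q, 0 ≤ Bfi i p q)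
    {z : Fin N → ℝ} (hz : ∀ i, 0 ≤ z i) (i : Fin N) : 0 ≤ gg Bf Bfi z i :=
  add_nonneg (mulVec_nonneg hB hz i) (Hquad_nonneg hBfi hz i)

lemma gg_mono {Bf : Matrix (Fin N) (Fin N) ℝ} {Bfi : Fin N → Matrix (Fin N) (Fin N) ℝ}
    (hB : ∀ p q, 0 ≤ Bf p q) (hBfi : ∀ i p q, 0 ≤ Bfi i p q)
    {z z' : Fin N → ℝ} (hz : ∀ i, 0 ≤ z i) (hzz : ∀ i, z i ≤ z' i) (i : Fin N) :
    gg Bf Bfi z i ≤ gg Bf Bfi z' i :=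
  add_le_add (mulVec_mono hB hzz i) (Hquad_mono hBfi hz hzz i)

/-- Monotonicity of the iteration map: increasing in `z`, decreasing in `w`. -/
lemma Tm_mono {n : ℕ} {Df Bf : Matrix (Fin N) (Fin N) ℝ}
    {Bfi : Fin N → Matrix (Fin N) (Fin N) ℝ} {c : ℝ}
    (hB : ∀ p q, 0 ≤ Bf p q) (hBfi : ∀ i p q, 0 ≤ Bfi i p q)
    {z z' w w' : Fin N → ℝ} (hz : ∀ i, 0 ≤ z i) (hzz : ∀ i, z i ≤ z' i)
    (hww : ∀ i, w' i ≤ w i) (i : Fin N)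
    (hdc : 0 < Df i i + c) (hcg : gg Bf Bfi z i ≤ c) :
    Tm n Df Bf Bfi c z w i ≤ Tm n Df Bf Bfi c z' w' i := by
  unfold Tm
  rw [div_le_div_iff₀ hdc hdc]
  have hg0 : 0 ≤ gg Bf Bfi z i := gg_nonneg hB hBfi hz i
  have hgg : gg Bf Bfi z i ≤ gg Bf Bfi z' i := gg_mono hB hBfi hz hzz i
  have hr0 : 0 ≤ coefr n z' w' i := ram_nonneg _
  have hzi : z i ≤ z' i := hzz i
  have hrd : coefr n z w i ≤ coefr n z' w' i + (z' i - z i) := by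
    unfold coefr
    by_cases hi : (i : ℕ) < n
    · simp only [hi, if_pos]
      calc ram (1 - (z i + w i)) ≤ ram ((1 - (z' i + w' i)) + (z' i - z i)) := by
            apply ram_mono; have := hww i; linarith
        _ ≤ ram (1 - (z' i + w' i)) + (z' i - z i) := ram_add_le (by linarith)
    · simp only [hi, if_neg, not_false_iff]
      have := hzz i; simp; linarith
  nlinarith [mul_le_mul_of_nonneg_right hrd hg0, mul_le_mul_of_nonneg_left hgg hr0,
    mul_le_mul_of_nonneg_left hcg (sub_nonneg.2 hzi)]

end S14
namespace S14
variable {N : ℕ}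

lemma diag_mulVec {Df : Matrix (Fin N) (Fin N) ℝ} (hd : ∀ i j, i ≠ j → Df i j = 0)
    (z : Fin N → ℝ) (i : Fin N) : Df.mulVec z i = Df i i * z i := by
  simp only [Matrix.mulVec, dotProduct]
  rw [Finset.sum_eq_single i]
  · intro j _ hji; rw [hd i j (Ne.symm hji), zero_mul]
  · intro h; exact absurd (Finset.mem_univ i) h

lemma Gfield_comp {n : ℕ} {Df Bf : Matrix (Fin N) (Fin N) ℝ}
    {Bfi : Fin N → Matrix (Fin N) (Fin N) ℝ} (hd : ∀ i j, i ≠ j → Df i j = 0)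
    (z : Fin N → ℝ) (i : Fin N) :
    Gfield n Df Bf Bfi z i =
      -(Df i i * z i) + (1 - (if (i : ℕ) < n then z i else 0)) * gg Bf Bfi z i := by
  simp only [Gfield, Pi.add_apply, Pi.neg_apply, diag_mulVec hd]
  rw [Matrix.sub_mulVec]
  simp only [Matrix.one_mulVec, Pi.sub_apply, Zmat, Matrix.mulVec_diagonal]
  unfold gg
  simp only [Pi.add_apply]
  ring

lemma GBi_comp {n : ℕ} {Df Bf : Matrix (Fin N) (Fin N) ℝ}
    {Bfi : Fin N → Matrix (Fin N) (Fin N) ℝ} (hd : ∀ i j, i ≠ j → Df i j = 0)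
    (z w : Fin N → ℝ) (i : Fin N) :
    GBi n Df Bf Bfi z w i =
      -(Df i i * z i) +
        (1 - ((if (i : ℕ) < n then z i else 0) + (if (i : ℕ) < n then w i else 0))) *
          gg Bf Bfi z i := by
  simp only [GBi, Pi.add_apply, Pi.neg_apply, diag_mulVec hd]
  rw [Matrix.sub_mulVec, Matrix.sub_mulVec]
  simp only [Matrix.one_mulVec, Pi.sub_apply, Zmat, Matrix.mulVec_diagonal]
  unfold gg
  simp only [Pi.add_apply]
  ring

/-- Componentwise equilibrium identity and `z_i < 1` for the first `n` coordinates. -/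
lemma equil_props {n : ℕ} {Df Bf : Matrix (Fin N) (Fin N) ℝ}
    {Bfi : Fin N → Matrix (Fin N) (Fin N) ℝ} (hd : ∀ i j, i ≠ j → Df i j = 0)
    (hdp : ∀ i, 0 < Df i i) (hB : ∀ p q, 0 ≤ Bf p q) (hBfi : ∀ i p q, 0 ≤ Bfi i p q)
    {z : Fin N → ℝ} (hpos : ∀ i, 0 < z i) (heq : Gfield n Df Bf Bfi z = 0) :
    (∀ i : Fin N, (1 - (if (i : ℕ) < n then z i else 0)) * gg Bf Bfi z i = Df i i * z i) ∧
      (∀ i : Fin N, (i : ℕ) < n → z i < 1) := by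
  have hc : ∀ i : Fin N,
      (1 - (if (i : ℕ) < n then z i else 0)) * gg Bf Bfi z i = Df i i * z i := by
    intro i
    have := congrFun heq i
    rw [Gfield_comp hd] at this
    simp only [Pi.zero_apply] at this
    linarith
  refine ⟨hc, fun i hi => ?_⟩
  have h1 := hc i
  rw [if_pos hi] at h1
  have h2 : 0 < Df i i * z i := mul_pos (hdp i) (hpos i)
  have h3 : 0 ≤ gg Bf Bfi z i := gg_nonneg hB hBfi (fun j => (hpos j).le) i
  nlinarith

end S14
namespace S14
variable {N : ℕ}

/-- Upper corner: `T(z*, w) ≤ z*` whenever `z*` is a single-virus equilibrium and `w ≥ 0`. -/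
lemma corner_high {n : ℕ} {Df Bf : Matrix (Fin N) (Fin N) ℝ}
    {Bfi : Fin N → Matrix (Fin N) (Fin N) ℝ} {c : ℝ}
    (hdp : ∀ i, 0 < Df i i) (hB : ∀ p q, 0 ≤ Bf p q) (hBfi : ∀ i p q, 0 ≤ Bfi i p q)
    (hc0 : 0 ≤ c) {zs w : Fin N → ℝ} (hzs : ∀ i, 0 < zs i)
    (hEq : ∀ i : Fin N, (1 - (if (i : ℕ) < n then zs i else 0)) * gg Bf Bfi zs i = Df i i * zs i)
    (hlt : ∀ i : Fin N, (i : ℕ) < n → zs i < 1)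
    (hw : ∀ i, 0 ≤ w i) (i : Fin N) :
    Tm n Df Bf Bfi c zs w i ≤ zs i := by
  have hdc : 0 < Df i i + c := by have := hdp i; linarith
  rw [Tm, div_le_iff₀ hdc]
  have hg0 : 0 ≤ gg Bf Bfi zs i := gg_nonneg hB hBfi (fun j => (hzs j).le) i
  have key : coefr n zs w i * gg Bf Bfi zs i ≤ Df i i * zs i := by
    rw [← hEq i]
    apply mul_le_mul_of_nonneg_right ?_ hg0
    unfold coefr
    by_cases hi : (i : ℕ) < n
    · simp only [hi, if_pos]
      rw [show (1 : ℝ) - zs i = ram (1 - zs i) from (ram_of_nonneg (by have := hlt i hi; linarith)).symm]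
      apply ram_mono; have := hw i; linarith
    · simp only [hi, if_neg, not_false_iff, sub_zero, ram_one]; exact le_refl 1
  nlinarith

/-- Lower corner: `T(ε a, w*) ≥ ε a` for the sub-eigenvector `a`. -/
lemma corner_low {n : ℕ} {Df Bf : Matrix (Fin N) (Fin N) ℝ}
    {Bfi : Fin N → Matrix (Fin N) (Fin N) ℝ} {c : ℝ}
    (hdp : ∀ i, 0 < Df i i) (hB : ∀ p q, 0 ≤ Bf p q) (hBfi : ∀ i p q, 0 ≤ Bfi i p q)
    (hc0 : 0 ≤ c) {a zo : Fin N → ℝ} {lam ε : ℝ} (hlam : 0 < lam) (hε : 0 < ε)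
    (ha : ∀ i, 0 ≤ a i) (hzo : ∀ i, 0 ≤ zo i)
    (hkey : ∀ i : Fin N,
      (Df i i + lam) * a i ≤ (1 - (if (i : ℕ) < n then zo i else 0)) * Bf.mulVec a i)
    (hεB : ∀ i, ε * Bf.mulVec a i ≤ lam) (i : Fin N) :
    ε * a i ≤ Tm n Df Bf Bfi c (fun j => ε * a j) zo i := by
  have hdc : 0 < Df i i + c := by have := hdp i; linarith
  rw [Tm, le_div_iff₀ hdc]
  have hεa : ∀ j, 0 ≤ ε * a j := fun j => mul_nonneg hε.le (ha j)
  have hBa0 : 0 ≤ Bf.mulVec a i := mulVec_nonneg hB ha i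
  have hmv : Bf.mulVec (fun j => ε * a j) i = ε * Bf.mulVec a i := by
    simp only [Matrix.mulVec, dotProduct, Finset.mul_sum]
    exact Finset.sum_congr rfl fun j _ => by ring
  have hgl : ε * Bf.mulVec a i ≤ gg Bf Bfi (fun j => ε * a j) i := by
    unfold gg; rw [hmv]
    have := Hquad_nonneg hBfi hεa i
    linarith
  have hg0 : (0:ℝ) ≤ gg Bf Bfi (fun j => ε * a j) i :=
    gg_nonneg hB hBfi hεa i
  have main : Df i i * (ε * a i) ≤ coefr n (fun j => ε * a j) zo i
      * gg Bf Bfi (fun j => ε * a j) i := by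
    have hk := hkey i
    have hεBa : ε * Bf.mulVec a i * a i ≤ lam * a i :=
      mul_le_mul_of_nonneg_right (hεB i) (ha i)
    by_cases hi : (i : ℕ) < n
    · rw [if_pos hi] at hk
      have hcoef : (1 - zo i - ε * a i) ≤ coefr n (fun j => ε * a j) zo i := by
        unfold coefr
        rw [if_pos hi]
        calc (1 - zo i - ε * a i) = 1 - (ε * a i + zo i) := by ring
          _ ≤ ram _ := le_ram _
      have hcoef0 : 0 ≤ coefr n (fun j => ε * a j) zo i := ram_nonneg _
      have step1 : (1 - zo i - ε * a i) * (ε * Bf.mulVec a i) ≤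
          coefr n (fun j => ε * a j) zo i * gg Bf Bfi (fun j => ε * a j) i := by
        rcases le_or_gt (1 - zo i - ε * a i) 0 with hneg | hposc
        · have : (1 - zo i - ε * a i) * (ε * Bf.mulVec a i) ≤ 0 :=
            mul_nonpos_of_nonpos_of_nonneg hneg (mul_nonneg hε.le hBa0)
          exact this.trans (mul_nonneg hcoef0 hg0)
        · exact mul_le_mul hcoef hgl (mul_nonneg hε.le hBa0) hcoef0
      have step2 : Df i i * (ε * a i) ≤ (1 - zo i - ε * a i) * (ε * Bf.mulVec a i) := by
        nlinarith [hεBa, hε.le, hk]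
      linarith
    · rw [if_neg hi] at hk
      rw [sub_zero, one_mul] at hk
      have hcn : coefr n (fun j => ε * a j) zo i = 1 := by
        unfold coefr; rw [if_neg hi, sub_zero, ram_one]
      rw [hcn, one_mul]
      have : ε * Bf.mulVec a i ≥ ε * ((Df i i + lam) * a i) :=
        mul_le_mul_of_nonneg_left hk hε.le
      nlinarith [mul_nonneg (mul_nonneg hlam.le hε.le) (ha i)]
  nlinarith

end S14
namespace S14
variable {N : ℕ}

lemma charpoly_root_vec (A : Matrix (Fin N) (Fin N) ℂ) {μ : ℂ}
    (h : A.charpoly.IsRoot μ) :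
    ∃ v : Fin N → ℂ, v ≠ 0 ∧ A.mulVec v = μ • v := by
  have hdet : (Matrix.diagonal (fun _ : Fin N => μ) - A).det = 0 := by
    have hmap : (Polynomial.evalRingHom μ).mapMatrix (Matrix.charmatrix A) =
        Matrix.diagonal (fun _ : Fin N => μ) - A := by
      ext i j
      by_cases hij : i = j
      · subst hij
        simp [Matrix.charmatrix_apply_eq]
      · simp [Matrix.charmatrix_apply_ne _ _ _ hij, Matrix.diagonal_apply_ne _ hij]
    have := (RingHom.map_det (Polynomial.evalRingHom μ) (Matrix.charmatrix A)).symm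
    rw [hmap] at this
    rw [this]
    simpa [Matrix.charpoly] using h
  obtain ⟨v, hv, hmv⟩ := (Matrix.exists_mulVec_eq_zero_iff).mpr hdet
  refine ⟨v, hv, ?_⟩
  rw [Matrix.sub_mulVec] at hmv
  funext i
  have := congrFun hmv i
  have h2 : μ * v i - (A.mulVec v) i = 0 := by
    have h3 := congrFun hmv i
    simpa [Matrix.mulVec_diagonal] using h3
  simp only [Pi.smul_apply, smul_eq_mul]
  linear_combination -h2

lemma entry_comp {n : ℕ} (Df Bf : Matrix (Fin N) (Fin N) ℝ) (zo : Fin N → ℝ) (i j : Fin N) :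
    (-Df + (1 - Zmat n zo) * Bf) i j =
      -Df i j + (1 - (if (i : ℕ) < n then zo i else 0)) * Bf i j := by
  have h1 : ((1 - Zmat n zo) * Bf) i j = Bf i j - (if (i : ℕ) < n then zo i else 0) * Bf i j := by
    rw [Matrix.sub_mul, Matrix.one_mul]
    simp [Zmat, Matrix.diagonal_mul]
  simp only [Matrix.add_apply, Matrix.neg_apply, h1]
  ring

/-- From `specAbs (-Df + (1-Z(zo))Bf) > 0` extract `lam > 0` and a nonzero nonnegative
vector `a` with `(Df + lam) a ≤ (1 - Z(zo)) Bf a` componentwise. -/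
lemma eig_vec {n : ℕ} {Df Bf : Matrix (Fin N) (Fin N) ℝ} {zo : Fin N → ℝ}
    (hd : ∀ i j, i ≠ j → Df i j = 0) (hB : ∀ p q, 0 ≤ Bf p q)
    (hzo : ∀ i : Fin N, (i : ℕ) < n → zo i ≤ 1)
    (hs : 0 < specAbs (-Df + (1 - Zmat n zo) * Bf)) :
    ∃ (lam : ℝ) (a : Fin N → ℝ), 0 < lam ∧ (∀ i, 0 ≤ a i) ∧ (∃ i, 0 < a i) ∧
      ∀ i : Fin N,
        (Df i i + lam) * a i ≤ (1 - (if (i : ℕ) < n then zo i else 0)) * Bf.mulVec a i := by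
  set M := -Df + (1 - Zmat n zo) * Bf with hM
  -- get a root with positive real part
  obtain ⟨μ, hroot, hre⟩ : ∃ μ : ℂ,
      ((M.map fun x : ℝ => (x : ℂ)).charpoly.IsRoot μ) ∧ 0 < μ.re := by
    by_contra hcon
    push_neg at hcon
    have : specAbs M ≤ 0 := by
      apply Real.sSup_nonpos
      rintro x ⟨μ, hr, rfl⟩
      exact hcon μ hr
    linarith
  obtain ⟨v, hv, hmv⟩ := charpoly_root_vec _ hroot
  set a : Fin N → ℝ := fun i => ‖v i‖ with ha
  have hann : ∀ i, 0 ≤ a i := fun i => norm_nonneg _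
  refine ⟨μ.re, a, hre, hann, ?_, ?_⟩
  · obtain ⟨i, hi⟩ := Function.ne_iff.mp hv
    exact ⟨i, by simpa [ha] using norm_pos_iff.mpr hi⟩
  · intro i
    set χ : ℝ := if (i : ℕ) < n then zo i else 0 with hχ
    have hχ1 : χ ≤ 1 := by
      rw [hχ]; split
      · exact hzo i (by assumption)
      · linarith
    -- component equation
    have hcomp : (μ + (Df i i : ℂ)) * v i = ∑ j, (((1 - χ) * Bf i j : ℝ) : ℂ) * v j := by
      have h0 := congrFun hmv i
      simp only [Matrix.mulVec, dotProduct, Pi.smul_apply, smul_eq_mul] at h0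
      have hsplit : ∑ j, (M.map fun x : ℝ => (x : ℂ)) i j * v j =
          -(Df i i : ℂ) * v i + ∑ j, (((1 - χ) * Bf i j : ℝ) : ℂ) * v j := by
        have : ∀ j, (M.map fun x : ℝ => (x : ℂ)) i j * v j =
            -(Df i j : ℂ) * v j + (((1 - χ) * Bf i j : ℝ) : ℂ) * v j := by
          intro j
          rw [Matrix.map_apply, hM, entry_comp, ← hχ]
          push_cast
          ring
        rw [Finset.sum_congr rfl fun j _ => this j, Finset.sum_add_distrib]
        congr 1
        rw [Finset.sum_eq_single i]
        · intro j _ hji; rw [hd i j (Ne.symm hji)]; simp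
        · intro h; exact absurd (Finset.mem_univ i) h
      rw [hsplit] at h0
      have : ∑ j, (((1 - χ) * Bf i j : ℝ) : ℂ) * v j = μ * v i + (Df i i : ℂ) * v i := by
        linear_combination h0
      rw [this]; ring
    -- take absolute values
    have habs : (μ.re + Df i i) * a i ≤ ∑ j, (1 - χ) * Bf i j * a j := by
      have h1 : (μ.re + Df i i) * a i ≤ ‖(μ + (Df i i : ℂ)) * v i‖ := by
        rw [norm_mul]
        apply mul_le_mul_of_nonneg_right ?_ (hann i)
        have := Complex.re_le_norm (μ + (Df i i : ℂ))
        simpa using this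
      have h2 : ‖(μ + (Df i i : ℂ)) * v i‖ ≤ ∑ j, (1 - χ) * Bf i j * a j := by
        rw [hcomp]
        refine (norm_sum_le _ _).trans ?_
        apply Finset.sum_le_sum
        intro j _
        rw [norm_mul, Complex.norm_real, Real.norm_eq_abs, abs_of_nonneg (by nlinarith [hB i j])]
      exact h1.trans h2
    have : (1 - χ) * Bf.mulVec a i = ∑ j, (1 - χ) * Bf i j * a j := by
      simp only [Matrix.mulVec, dotProduct, Finset.mul_sum]
      exact Finset.sum_congr rfl fun j _ => by ring
    rw [this]
    calc (Df i i + μ.re) * a i = (μ.re + Df i i) * a i := by ring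
      _ ≤ _ := habs

end S14
namespace S14
variable {N : ℕ}

/-- Choose a uniform small `ε`. -/
lemma exists_eps [Nonempty (Fin N)] (b p : Fin N → ℝ) (hb : ∀ i, 0 ≤ b i)
    (hp : ∀ i, 0 < p i) : ∃ ε : ℝ, 0 < ε ∧ ∀ i, ε * b i ≤ p i := by
  refine ⟨Finset.univ.inf' Finset.univ_nonempty (fun i => p i / (b i + 1)), ?_, ?_⟩
  · rw [Finset.lt_inf'_iff]
    intro i _
    exact div_pos (hp i) (by have := hb i; linarith)
  · intro i
    have h1 : Finset.univ.inf' Finset.univ_nonempty (fun i => p i / (b i + 1)) ≤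
        p i / (b i + 1) := Finset.inf'_le _ (Finset.mem_univ i)
    have hb1 : 0 < b i + 1 := by have := hb i; linarith
    have h2 : p i / (b i + 1) * b i ≤ p i := by
      rw [div_mul_eq_mul_div, div_le_iff₀ hb1]
      nlinarith [hp i, hb i]
    exact le_trans (mul_le_mul_of_nonneg_right h1 (hb i)) h2

/-- Positivity bootstrap through irreducibility. -/
lemma pos_boot {Bf : Matrix (Fin N) (Fin N) ℝ} (hirr : Irred Bf) {z : Fin N → ℝ}
    (hnn : ∀ i, 0 ≤ z i) (hex : ∃ j, 0 < z j)
    (hstep : ∀ i j : Fin N, z i = 0 → 0 < Bf i j → z j = 0) (i : Fin N) : 0 < z i := by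
  rcases eq_or_lt_of_le (hnn i) with h0 | h; swap
  · exact h
  exfalso
  obtain ⟨j, hj⟩ := hex
  have hij : i ≠ j := by rintro rfl; rw [← h0] at hj; exact lt_irrefl _ hj
  obtain ⟨r, k, hk0, hkr, hkp⟩ := hirr i j hij
  have : ∀ s : ℕ, s ≤ r → z (k s) = 0 := by
    intro s
    induction s with
    | zero => intro _; rw [hk0]; exact h0.symm
    | succ t ih =>
      intro hs
      exact hstep (k t) (k (t + 1)) (ih (by omega)) (hkp t (by omega))
  have := this r le_rfl
  rw [hkr] at this
  rw [this] at hj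
  exact lt_irrefl _ hj

/-- Continuity of the iteration map in the pair of arguments. -/
lemma Tm_cont {n : ℕ} {Df Bf : Matrix (Fin N) (Fin N) ℝ}
    {Bfi : Fin N → Matrix (Fin N) (Fin N) ℝ} {c : ℝ} (i : Fin N) :
    Continuous fun p : (Fin N → ℝ) × (Fin N → ℝ) => Tm n Df Bf Bfi c p.1 p.2 i := by
  unfold Tm coefr ram gg Hquad
  simp only [Matrix.mulVec, dotProduct]
  apply Continuous.div_const
  apply Continuous.add
  · exact continuous_const.mul ((continuous_apply i).comp continuous_fst)
  · apply Continuous.mul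
    · apply Continuous.max ?_ continuous_const
      apply Continuous.sub continuous_const
      split
      · exact ((continuous_apply i).comp continuous_fst).add
          ((continuous_apply i).comp continuous_snd)
      · exact continuous_const
    · apply Continuous.add
      · apply continuous_finset_sum
        intro j _
        exact continuous_const.mul ((continuous_apply j).comp continuous_fst)
      · apply continuous_finset_sum
        intro p _
        apply Continuous.mul ((continuous_apply p).comp continuous_fst)
        apply continuous_finset_sum
        intro q _
        exact continuous_const.mul ((continuous_apply q).comp continuous_fst)

end S14

set_option maxHeartbeats 1000000 in
/-- existence of a coexisting equilibrium of the bi-virus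
higher-order SIWS model. -/
theorem stmt14 (n m : ℕ) (hn : 0 < n)
    (Df1 Bf1 : Matrix (Fin (n + m)) (Fin (n + m)) ℝ)
    (Bfi1 : Fin (n + m) → Matrix (Fin (n + m)) (Fin (n + m)) ℝ)
    (Df2 Bf2 : Matrix (Fin (n + m)) (Fin (n + m)) ℝ)
    (Bfi2 : Fin (n + m) → Matrix (Fin (n + m)) (Fin (n + m)) ℝ)
    (hmod1 : ModelHyp n Df1 Bf1 Bfi1) (hmod2 : ModelHyp n Df2 Bf2 Bfi2)
    (hirr1 : Irred Bf1) (hirr2 : Irred Bf2)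
    (hr1 : 1 < specRad (Df1⁻¹ * Bf1)) (hr2 : 1 < specRad (Df2⁻¹ * Bf2))
    (z1s z2s : Fin (n + m) → ℝ)
    (h1pos : ∀ i, 0 < z1s i) (h2pos : ∀ i, 0 < z2s i)
    (h1eq : Gfield n Df1 Bf1 Bfi1 z1s = 0) (h2eq : Gfield n Df2 Bf2 Bfi2 z2s = 0)
    (hs1 : 0 < specAbs (-Df1 + (1 - Zmat n z2s) * Bf1))
    (hs2 : 0 < specAbs (-Df2 + (1 - Zmat n z1s) * Bf2)) :
    ∃ zh1 zh2 : Fin (n + m) → ℝ,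
      (∀ i, 0 < zh1 i) ∧ (∀ i, 0 < zh2 i) ∧
      (∀ i : Fin (n + m), (i : ℕ) < n → zh1 i + zh2 i ≤ 1) ∧
      GBi n Df1 Bf1 Bfi1 zh1 zh2 = 0 ∧ GBi n Df2 Bf2 Bfi2 zh2 zh1 = 0 := by
  classical
  open S14 in
  obtain ⟨hd1, hdp1, hB1, -, hBfi1, -, -⟩ := hmod1
  obtain ⟨hd2, hdp2, hB2, -, hBfi2, -, -⟩ := hmod2
  haveI : Nonempty (Fin (n + m)) := ⟨⟨0, by omega⟩⟩
  obtain ⟨hEq1, hlt1⟩ := S14.equil_props hd1 hdp1 hB1 hBfi1 h1pos h1eq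
  obtain ⟨hEq2, hlt2⟩ := S14.equil_props hd2 hdp2 hB2 hBfi2 h2pos h2eq
  obtain ⟨lam1, a1, hlam1, ha1nn, ha1ex, hkey1⟩ :=
    S14.eig_vec hd1 hB1 (fun i hi => (hlt2 i hi).le) hs1
  obtain ⟨lam2, a2, hlam2, ha2nn, ha2ex, hkey2⟩ :=
    S14.eig_vec hd2 hB2 (fun i hi => (hlt1 i hi).le) hs2
  -- choose ε₁, ε₂
  obtain ⟨εa, hεa, hεa'⟩ := S14.exists_eps a1 z1s ha1nn h1pos
  obtain ⟨εb, hεb, hεb'⟩ := S14.exists_eps (fun i => Bf1.mulVec a1 i) (fun _ => lam1)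
    (fun i => S14.mulVec_nonneg hB1 ha1nn i) (fun _ => hlam1)
  obtain ⟨εc, hεc, hεc'⟩ := S14.exists_eps a2 z2s ha2nn h2pos
  obtain ⟨εd, hεd, hεd'⟩ := S14.exists_eps (fun i => Bf2.mulVec a2 i) (fun _ => lam2)
    (fun i => S14.mulVec_nonneg hB2 ha2nn i) (fun _ => hlam2)
  set ε1 : ℝ := min εa εb with hε1def
  set ε2 : ℝ := min εc εd with hε2def
  have hε1 : 0 < ε1 := lt_min hεa hεb
  have hε2 : 0 < ε2 := lt_min hεc hεd
  have h1a : ∀ i, ε1 * a1 i ≤ z1s i := fun i =>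
    le_trans (mul_le_mul_of_nonneg_right (min_le_left _ _) (ha1nn i)) (hεa' i)
  have h1b : ∀ i, ε1 * Bf1.mulVec a1 i ≤ lam1 := fun i =>
    le_trans (mul_le_mul_of_nonneg_right (min_le_right _ _)
      (S14.mulVec_nonneg hB1 ha1nn i)) (hεb' i)
  have h2a : ∀ i, ε2 * a2 i ≤ z2s i := fun i =>
    le_trans (mul_le_mul_of_nonneg_right (min_le_left _ _) (ha2nn i)) (hεc' i)
  have h2b : ∀ i, ε2 * Bf2.mulVec a2 i ≤ lam2 := fun i =>
    le_trans (mul_le_mul_of_nonneg_right (min_le_right _ _)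
      (S14.mulVec_nonneg hB2 ha2nn i)) (hεd' i)
  set lo1 : Fin (n + m) → ℝ := fun i => ε1 * a1 i with hlo1def
  set lo2 : Fin (n + m) → ℝ := fun i => ε2 * a2 i with hlo2def
  have hlo1nn : ∀ i, 0 ≤ lo1 i := fun i => mul_nonneg hε1.le (ha1nn i)
  have hlo2nn : ∀ i, 0 ≤ lo2 i := fun i => mul_nonneg hε2.le (ha2nn i)
  -- the constant c
  set c : ℝ := 1 + ∑ i, S14.gg Bf1 Bfi1 z1s i + ∑ i, S14.gg Bf2 Bfi2 z2s i with hcdef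
  have hsum1nn : 0 ≤ ∑ i, S14.gg Bf1 Bfi1 z1s i :=
    Finset.sum_nonneg fun i _ => S14.gg_nonneg hB1 hBfi1 (fun j => (h1pos j).le) i
  have hsum2nn : 0 ≤ ∑ i, S14.gg Bf2 Bfi2 z2s i :=
    Finset.sum_nonneg fun i _ => S14.gg_nonneg hB2 hBfi2 (fun j => (h2pos j).le) i
  have hc0 : 0 ≤ c := by rw [hcdef]; linarith
  have hcg1 : ∀ z : Fin (n + m) → ℝ, (∀ i, 0 ≤ z i) → (∀ i, z i ≤ z1s i) →
      ∀ i, S14.gg Bf1 Bfi1 z i ≤ c := by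
    intro z hz hzle i
    have h1 : S14.gg Bf1 Bfi1 z i ≤ S14.gg Bf1 Bfi1 z1s i := S14.gg_mono hB1 hBfi1 hz hzle i
    have h2 : S14.gg Bf1 Bfi1 z1s i ≤ ∑ j, S14.gg Bf1 Bfi1 z1s j :=
      Finset.single_le_sum (f := fun j => S14.gg Bf1 Bfi1 z1s j)
        (fun j _ => S14.gg_nonneg hB1 hBfi1 (fun k => (h1pos k).le) j) (Finset.mem_univ i)
    rw [hcdef]; linarith
  have hcg2 : ∀ z : Fin (n + m) → ℝ, (∀ i, 0 ≤ z i) → (∀ i, z i ≤ z2s i) →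
      ∀ i, S14.gg Bf2 Bfi2 z i ≤ c := by
    intro z hz hzle i
    have h1 : S14.gg Bf2 Bfi2 z i ≤ S14.gg Bf2 Bfi2 z2s i := S14.gg_mono hB2 hBfi2 hz hzle i
    have h2 : S14.gg Bf2 Bfi2 z2s i ≤ ∑ j, S14.gg Bf2 Bfi2 z2s j :=
      Finset.single_le_sum (f := fun j => S14.gg Bf2 Bfi2 z2s j)
        (fun j _ => S14.gg_nonneg hB2 hBfi2 (fun k => (h2pos k).le) j) (Finset.mem_univ i)
    rw [hcdef]; linarith
  have hdc1 : ∀ i, (0:ℝ) < Df1 i i + c := fun i => by have := hdp1 i; linarith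
  have hdc2 : ∀ i, (0:ℝ) < Df2 i i + c := fun i => by have := hdp2 i; linarith
  -- monotonicity wrappers
  have hT1mono : ∀ z z' w w' : Fin (n + m) → ℝ, (∀ i, 0 ≤ z i) → (∀ i, z i ≤ z' i) →
      (∀ i, z' i ≤ z1s i) → (∀ i, w' i ≤ w i) →
      ∀ i, S14.Tm n Df1 Bf1 Bfi1 c z w i ≤ S14.Tm n Df1 Bf1 Bfi1 c z' w' i := by
    intro z z' w w' hz hzz hz'le hww i
    exact S14.Tm_mono hB1 hBfi1 hz hzz hww i (hdc1 i)
      (hcg1 z hz (fun j => le_trans (hzz j) (hz'le j)) i)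
  have hT2mono : ∀ z z' w w' : Fin (n + m) → ℝ, (∀ i, 0 ≤ z i) → (∀ i, z i ≤ z' i) →
      (∀ i, z' i ≤ z2s i) → (∀ i, w' i ≤ w i) →
      ∀ i, S14.Tm n Df2 Bf2 Bfi2 c z w i ≤ S14.Tm n Df2 Bf2 Bfi2 c z' w' i := by
    intro z z' w w' hz hzz hz'le hww i
    exact S14.Tm_mono hB2 hBfi2 hz hzz hww i (hdc2 i)
      (hcg2 z hz (fun j => le_trans (hzz j) (hz'le j)) i)
  -- corner inequalities
  have hhigh1 : ∀ w : Fin (n + m) → ℝ, (∀ i, 0 ≤ w i) →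
      ∀ i, S14.Tm n Df1 Bf1 Bfi1 c z1s w i ≤ z1s i := fun w hw i =>
    S14.corner_high hdp1 hB1 hBfi1 hc0 h1pos hEq1 hlt1 hw i
  have hhigh2 : ∀ w : Fin (n + m) → ℝ, (∀ i, 0 ≤ w i) →
      ∀ i, S14.Tm n Df2 Bf2 Bfi2 c z2s w i ≤ z2s i := fun w hw i =>
    S14.corner_high hdp2 hB2 hBfi2 hc0 h2pos hEq2 hlt2 hw i
  have hlow1 : ∀ i, lo1 i ≤ S14.Tm n Df1 Bf1 Bfi1 c lo1 z2s i := fun i =>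
    S14.corner_low hdp1 hB1 hBfi1 hc0 hlam1 hε1 ha1nn (fun j => (h2pos j).le) hkey1 h1b i
  have hlow2 : ∀ i, lo2 i ≤ S14.Tm n Df2 Bf2 Bfi2 c lo2 z1s i := fun i =>
    S14.corner_low hdp2 hB2 hBfi2 hc0 hlam2 hε2 ha2nn (fun j => (h1pos j).le) hkey2 h2b i
  -- the iteration
  set F : (Fin (n + m) → ℝ) × (Fin (n + m) → ℝ) → (Fin (n + m) → ℝ) × (Fin (n + m) → ℝ) :=
    fun p => (fun i => S14.Tm n Df1 Bf1 Bfi1 c p.1 p.2 i,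
              fun i => S14.Tm n Df2 Bf2 Bfi2 c p.2 p.1 i) with hFdef
  set x : ℕ → (Fin (n + m) → ℝ) × (Fin (n + m) → ℝ) := fun k => F^[k] (lo1, z2s) with hxdef
  have hx0 : x 0 = (lo1, z2s) := rfl
  have hxs : ∀ k, x (k + 1) = F (x k) := fun k => Function.iterate_succ_apply' F k _
  have hxs1 : ∀ k i, (x (k + 1)).1 i = S14.Tm n Df1 Bf1 Bfi1 c (x k).1 (x k).2 i := by
    intro k i; rw [hxs k]
  have hxs2 : ∀ k i, (x (k + 1)).2 i = S14.Tm n Df2 Bf2 Bfi2 c (x k).2 (x k).1 i := by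
    intro k i; rw [hxs k]
  -- invariant
  have inv : ∀ k, (∀ i, lo1 i ≤ (x k).1 i) ∧ (∀ i, (x k).1 i ≤ z1s i) ∧
      (∀ i, lo2 i ≤ (x k).2 i) ∧ (∀ i, (x k).2 i ≤ z2s i) ∧
      (∀ i, (x k).1 i ≤ (x (k + 1)).1 i) ∧ (∀ i, (x (k + 1)).2 i ≤ (x k).2 i) := by
    intro k
    induction k with
    | zero =>
      refine ⟨fun i => le_rfl, h1a, h2a, fun i => le_rfl, ?_, ?_⟩
      · intro i; rw [hxs1 0 i]; exact hlow1 i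
      · intro i; rw [hxs2 0 i]
        exact hhigh2 lo1 hlo1nn i
    | succ k ih =>
      obtain ⟨i1, i2, i3, i4, i5, i6⟩ := ih
      have hk1nn : ∀ i, 0 ≤ (x k).1 i := fun i => le_trans (hlo1nn i) (i1 i)
      have hk2nn : ∀ i, 0 ≤ (x k).2 i := fun i => le_trans (hlo2nn i) (i3 i)
      have j1 : ∀ i, lo1 i ≤ (x (k + 1)).1 i := by
        intro i; rw [hxs1 k i]
        exact le_trans (hlow1 i) (hT1mono lo1 (x k).1 z2s (x k).2 hlo1nn i1 i2 i4 i)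
      have j2 : ∀ i, (x (k + 1)).1 i ≤ z1s i := by
        intro i; rw [hxs1 k i]
        exact le_trans (hT1mono (x k).1 z1s (x k).2 lo2 hk1nn i2 (fun j => le_rfl) i3 i)
          (hhigh1 lo2 hlo2nn i)
      have j3 : ∀ i, lo2 i ≤ (x (k + 1)).2 i := by
        intro i; rw [hxs2 k i]
        exact le_trans (hlow2 i) (hT2mono lo2 (x k).2 z1s (x k).1 hlo2nn i3 i4 i2 i)
      have j4 : ∀ i, (x (k + 1)).2 i ≤ z2s i := by
        intro i; rw [hxs2 k i]
        exact le_trans (hT2mono (x k).2 z2s (x k).1 lo1 hk2nn i4 (fun j => le_rfl) i1 i)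
          (hhigh2 lo1 hlo1nn i)
      have j1nn : ∀ i, 0 ≤ (x (k + 1)).1 i := fun i => le_trans (hlo1nn i) (j1 i)
      have j2nn : ∀ i, 0 ≤ (x (k + 1)).2 i := fun i => le_trans (hlo2nn i) (j3 i)
      refine ⟨j1, j2, j3, j4, ?_, ?_⟩
      · intro i; rw [hxs1 k i, hxs1 (k + 1) i]
        exact hT1mono (x k).1 (x (k + 1)).1 (x k).2 (x (k + 1)).2 hk1nn i5 j2 i6 i
      · intro i; rw [hxs2 k i, hxs2 (k + 1) i]
        exact hT2mono (x (k + 1)).2 (x k).2 (x (k + 1)).1 (x k).1 j2nn i6 i4 i5 i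
  -- limits
  have hmono1 : ∀ i, Monotone fun k => (x k).1 i := fun i =>
    monotone_nat_of_le_succ fun k => (inv k).2.2.2.2.1 i
  have hanti2 : ∀ i, Antitone fun k => (x k).2 i := fun i =>
    antitone_nat_of_succ_le fun k => (inv k).2.2.2.2.2 i
  have hbdd1 : ∀ i, BddAbove (Set.range fun k => (x k).1 i) := fun i =>
    ⟨z1s i, by rintro _ ⟨k, rfl⟩; exact (inv k).2.1 i⟩
  have hbdd2 : ∀ i, BddBelow (Set.range fun k => (x k).2 i) := fun i =>
    ⟨lo2 i, by rintro _ ⟨k, rfl⟩; exact (inv k).2.2.1 i⟩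
  set zh1 : Fin (n + m) → ℝ := fun i => ⨆ k, (x k).1 i with hzh1def
  set zh2 : Fin (n + m) → ℝ := fun i => ⨅ k, (x k).2 i with hzh2def
  have ht1 : ∀ i, Tendsto (fun k => (x k).1 i) atTop (nhds (zh1 i)) := fun i =>
    tendsto_atTop_ciSup (hmono1 i) (hbdd1 i)
  have ht2 : ∀ i, Tendsto (fun k => (x k).2 i) atTop (nhds (zh2 i)) := fun i =>
    tendsto_atTop_ciInf (hanti2 i) (hbdd2 i)
  have hzh1lo : ∀ i, lo1 i ≤ zh1 i := fun i =>
    le_trans (le_refl (lo1 i)) (le_ciSup (hbdd1 i) 0)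
  have hzh1hi : ∀ i, zh1 i ≤ z1s i := fun i => ciSup_le fun k => (inv k).2.1 i
  have hzh2lo : ∀ i, lo2 i ≤ zh2 i := fun i => le_ciInf fun k => (inv k).2.2.1 i
  have hzh2hi : ∀ i, zh2 i ≤ z2s i := fun i =>
    le_trans (ciInf_le (hbdd2 i) 0) (le_refl _)
  have hzh1nn : ∀ i, 0 ≤ zh1 i := fun i => le_trans (hlo1nn i) (hzh1lo i)
  have hzh2nn : ∀ i, 0 ≤ zh2 i := fun i => le_trans (hlo2nn i) (hzh2lo i)
  -- fixed point
  have hpair : Tendsto x atTop (nhds (zh1, zh2)) := by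
    have h := Filter.Tendsto.prodMk_nhds (tendsto_pi_nhds.2 ht1) (tendsto_pi_nhds.2 ht2)
    simpa using h
  have hfix1 : ∀ i, zh1 i = S14.Tm n Df1 Bf1 Bfi1 c zh1 zh2 i := by
    intro i
    have hA : Tendsto (fun k => (x (k + 1)).1 i) atTop (nhds (zh1 i)) :=
      (tendsto_add_atTop_iff_nat 1).2 (ht1 i)
    have hB : Tendsto (fun k => S14.Tm n Df1 Bf1 Bfi1 c (x k).1 (x k).2 i) atTop
        (nhds (S14.Tm n Df1 Bf1 Bfi1 c zh1 zh2 i)) :=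
      ((S14.Tm_cont i).tendsto (zh1, zh2)).comp hpair
    have heqf : (fun k => (x (k + 1)).1 i) =
        fun k => S14.Tm n Df1 Bf1 Bfi1 c (x k).1 (x k).2 i := funext fun k => hxs1 k i
    rw [heqf] at hA
    exact tendsto_nhds_unique hA hB
  have hfix2 : ∀ i, zh2 i = S14.Tm n Df2 Bf2 Bfi2 c zh2 zh1 i := by
    intro i
    have hA : Tendsto (fun k => (x (k + 1)).2 i) atTop (nhds (zh2 i)) :=
      (tendsto_add_atTop_iff_nat 1).2 (ht2 i)
    have hB : Tendsto (fun k => S14.Tm n Df2 Bf2 Bfi2 c (x k).2 (x k).1 i) atTop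
        (nhds (S14.Tm n Df2 Bf2 Bfi2 c zh2 zh1 i)) := by
      have hpair' : Tendsto (fun k => ((x k).2, (x k).1)) atTop (nhds (zh2, zh1)) :=
        Filter.Tendsto.prodMk_nhds (tendsto_pi_nhds.2 ht2) (tendsto_pi_nhds.2 ht1)
      exact ((S14.Tm_cont i).tendsto (zh2, zh1)).comp hpair'
    have heqf : (fun k => (x (k + 1)).2 i) =
        fun k => S14.Tm n Df2 Bf2 Bfi2 c (x k).2 (x k).1 i := funext fun k => hxs2 k i
    rw [heqf] at hA
    exact tendsto_nhds_unique hA hB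
  -- the componentwise identities
  have hid1 : ∀ i, Df1 i i * zh1 i = S14.coefr n zh1 zh2 i * S14.gg Bf1 Bfi1 zh1 i := by
    intro i
    have h := hfix1 i
    rw [S14.Tm, eq_div_iff (ne_of_gt (hdc1 i))] at h
    linarith [h]
  have hid2 : ∀ i, Df2 i i * zh2 i = S14.coefr n zh2 zh1 i * S14.gg Bf2 Bfi2 zh2 i := by
    intro i
    have h := hfix2 i
    rw [S14.Tm, eq_div_iff (ne_of_gt (hdc2 i))] at h
    linarith [h]
  -- the sum bound
  have hsum : ∀ i : Fin (n + m), (i : ℕ) < n → zh1 i + zh2 i ≤ 1 := by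
    intro i hi
    by_contra hgt
    push_neg at hgt
    have hc1 : S14.coefr n zh1 zh2 i = 0 := by
      unfold S14.coefr S14.ram
      rw [if_pos hi]
      exact max_eq_right (by linarith)
    have hc2 : S14.coefr n zh2 zh1 i = 0 := by
      unfold S14.coefr S14.ram
      rw [if_pos hi]
      exact max_eq_right (by linarith)
    have hz1 : zh1 i = 0 := by
      have := hid1 i; rw [hc1, zero_mul] at this
      exact (mul_eq_zero.mp this).resolve_left (ne_of_gt (hdp1 i))
    have hz2 : zh2 i = 0 := by
      have := hid2 i; rw [hc2, zero_mul] at this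
      exact (mul_eq_zero.mp this).resolve_left (ne_of_gt (hdp2 i))
    rw [hz1, hz2] at hgt
    linarith
  -- positivity
  have hstep1 : ∀ i j : Fin (n + m), zh1 i = 0 → 0 < Bf1 i j → zh1 j = 0 := by
    intro i j hzi hbij
    have hcoefpos : 0 < S14.coefr n zh1 zh2 i := by
      unfold S14.coefr
      by_cases hi : (i : ℕ) < n
      · rw [if_pos hi, hzi]
        have := hlt2 i hi
        have h2 := hzh2hi i
        exact lt_of_lt_of_le (by linarith) (S14.le_ram _)
      · rw [if_neg hi, sub_zero, S14.ram_one]; norm_num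
    have hgg0 : S14.gg Bf1 Bfi1 zh1 i = 0 := by
      have h := hid1 i
      rw [hzi, mul_zero] at h
      have hnn : 0 ≤ S14.gg Bf1 Bfi1 zh1 i := S14.gg_nonneg hB1 hBfi1 hzh1nn i
      rcases eq_or_lt_of_le hnn with h0 | hgpos
      · exact h0.symm
      · exfalso
        have := mul_pos hcoefpos hgpos
        linarith
    have hmv0 : Bf1.mulVec zh1 i = 0 := by
      have h1 : 0 ≤ Bf1.mulVec zh1 i := S14.mulVec_nonneg hB1 hzh1nn i
      have h2 : 0 ≤ Hquad Bfi1 zh1 i := S14.Hquad_nonneg hBfi1 hzh1nn i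
      have := hgg0
      unfold S14.gg at this
      linarith
    have hterm : Bf1 i j * zh1 j = 0 := by
      have hs : ∑ k, Bf1 i k * zh1 k = 0 := by
        simpa [Matrix.mulVec, dotProduct] using hmv0
      have := (Finset.sum_eq_zero_iff_of_nonneg
        (fun k _ => mul_nonneg (hB1 i k) (hzh1nn k))).mp hs j (Finset.mem_univ j)
      exact this
    rcases mul_eq_zero.mp hterm with h | h
    · exact absurd h (ne_of_gt hbij)
    · exact h
  have hstep2 : ∀ i j : Fin (n + m), zh2 i = 0 → 0 < Bf2 i j → zh2 j = 0 := by
    intro i j hzi hbij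
    have hcoefpos : 0 < S14.coefr n zh2 zh1 i := by
      unfold S14.coefr
      by_cases hi : (i : ℕ) < n
      · rw [if_pos hi, hzi]
        have := hlt1 i hi
        have h2 := hzh1hi i
        exact lt_of_lt_of_le (by linarith) (S14.le_ram _)
      · rw [if_neg hi, sub_zero, S14.ram_one]; norm_num
    have hgg0 : S14.gg Bf2 Bfi2 zh2 i = 0 := by
      have h := hid2 i
      rw [hzi, mul_zero] at h
      have hnn : 0 ≤ S14.gg Bf2 Bfi2 zh2 i := S14.gg_nonneg hB2 hBfi2 hzh2nn i
      rcases eq_or_lt_of_le hnn with h0 | hgpos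
      · exact h0.symm
      · exfalso
        have := mul_pos hcoefpos hgpos
        linarith
    have hmv0 : Bf2.mulVec zh2 i = 0 := by
      have h1 : 0 ≤ Bf2.mulVec zh2 i := S14.mulVec_nonneg hB2 hzh2nn i
      have h2 : 0 ≤ Hquad Bfi2 zh2 i := S14.Hquad_nonneg hBfi2 hzh2nn i
      have := hgg0
      unfold S14.gg at this
      linarith
    have hterm : Bf2 i j * zh2 j = 0 := by
      have hs : ∑ k, Bf2 i k * zh2 k = 0 := by
        simpa [Matrix.mulVec, dotProduct] using hmv0
      exact (Finset.sum_eq_zero_iff_of_nonneg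
        (fun k _ => mul_nonneg (hB2 i k) (hzh2nn k))).mp hs j (Finset.mem_univ j)
    rcases mul_eq_zero.mp hterm with h | h
    · exact absurd h (ne_of_gt hbij)
    · exact h
  obtain ⟨i1, hi1⟩ := ha1ex
  obtain ⟨i2, hi2⟩ := ha2ex
  have hex1 : ∃ j, 0 < zh1 j := ⟨i1, lt_of_lt_of_le (mul_pos hε1 hi1) (hzh1lo i1)⟩
  have hex2 : ∃ j, 0 < zh2 j := ⟨i2, lt_of_lt_of_le (mul_pos hε2 hi2) (hzh2lo i2)⟩
  have hpos1 : ∀ i, 0 < zh1 i := fun i => S14.pos_boot hirr1 hzh1nn hex1 hstep1 i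
  have hpos2 : ∀ i, 0 < zh2 i := fun i => S14.pos_boot hirr2 hzh2nn hex2 hstep2 i
  -- conclusion
  refine ⟨zh1, zh2, hpos1, hpos2, hsum, ?_, ?_⟩
  · funext i
    rw [S14.GBi_comp hd1]
    have h := hid1 i
    by_cases hi : (i : ℕ) < n
    · have hcoef : S14.coefr n zh1 zh2 i = 1 - (zh1 i + zh2 i) := by
        unfold S14.coefr
        rw [if_pos hi]
        exact S14.ram_of_nonneg (by have := hsum i hi; linarith)
      rw [hcoef] at h
      simp only [if_pos hi, Pi.zero_apply]
      linarith
    · have hcoef : S14.coefr n zh1 zh2 i = 1 := by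
        unfold S14.coefr
        rw [if_neg hi, sub_zero, S14.ram_one]
      rw [hcoef, one_mul] at h
      simp only [if_neg hi, Pi.zero_apply]
      linarith
  · funext i
    rw [S14.GBi_comp hd2]
    have h := hid2 i
    by_cases hi : (i : ℕ) < n
    · have hcoef : S14.coefr n zh2 zh1 i = 1 - (zh2 i + zh1 i) := by
        unfold S14.coefr
        rw [if_pos hi]
        exact S14.ram_of_nonneg (by have := hsum i hi; linarith)
      rw [hcoef] at h
      simp only [if_pos hi, Pi.zero_apply]
      linarith
    · have hcoef : S14.coefr n zh2 zh1 i = 1 := by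
        unfold S14.coefr
        rw [if_neg hi, sub_zero, S14.ram_one]
      rw [hcoef, one_mul] at h
      simp only [if_neg hi, Pi.zero_apply]
      linarith
end
end
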